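/- arXiv:1501.03228 — 6 statements merged into one kernel-verified Lean document; each statement's English description precedes it below -/
import Mathlib

section
/- Let p > 1 and fix 0 ≤ x₀ < x₁ ≤ D. Define f(x) = ν̂(x ∨ x₀, D) for x < x₁ and f(x) = 0 for x ≥ x₁, where ν̂(a,D) = ∫_a^D v^(1-p*). Then for x ∈ (x₀, x₁), the quantity I(f)(x) = (−1/(v f' |f'|^(p-2)))(x) · ∫_0^x f^(p-1) dμ equals ν̂(x₀,D)^(p-1) μ(0,x₀) + ∫_{x₀}^x ν̂(t,D)^(p-1) μ(dt); in particular inf_{x∈(x₀,x₁)} I(f)(x) = ν̂(x₀,D)^(p-1) μ(0,x₀). -/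
open MeasureTheory Set Filter Topology

/-- Test function computation: for `f = ν̂(· ∨ x₀, D) 1_{[0,x₁)}`, on `(x₀,x₁)` the
single-integral operator equals
`ν̂(x₀,D)^(p-1) μ(0,x₀) + ∫_{x₀}^x ν̂(t,D)^(p-1) μ(dt)`, and its infimum over
`(x₀,x₁)` is `ν̂(x₀,D)^(p-1) μ(0,x₀)`. -/
theorem stmt6 (p pstar D x₀ x₁ : ℝ) (hp : 1 < p) (hconj : 1/p + 1/pstar = 1)
    (hx₀ : 0 ≤ x₀) (hx01 : x₀ < x₁) (hx₁D : x₁ ≤ D)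
    (u v : ℝ → ℝ)
    (hu : ∀ x ∈ Ioo (0:ℝ) D, 0 < u x) (hv : ∀ x ∈ Ioo (0:ℝ) D, 0 < v x)
    (huI : IntegrableOn u (Ioo 0 x₁))
    (hvI : IntegrableOn (fun s => v s ^ (1 - pstar)) (Ioo x₀ D))
    (f : ℝ → ℝ)
    (hf : ∀ x, f x = if x < x₁ then ∫ s in Ioo (max x x₀) D, v s ^ (1 - pstar) else 0) :
    (∀ x ∈ Ioo x₀ x₁,
      (-(1 / (v x * (-(v x ^ (1 - pstar))) * |(-(v x ^ (1 - pstar)))| ^ (p - 2)))) *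
          (∫ t in Ioo 0 x, f t ^ (p - 1) * u t)
        = (∫ s in Ioo x₀ D, v s ^ (1 - pstar)) ^ (p - 1) * (∫ t in Ioo 0 x₀, u t)
          + ∫ t in Ioo x₀ x, (∫ s in Ioo t D, v s ^ (1 - pstar)) ^ (p - 1) * u t)
    ∧ IsGLB ((fun x =>
        (-(1 / (v x * (-(v x ^ (1 - pstar))) * |(-(v x ^ (1 - pstar)))| ^ (p - 2)))) *
          (∫ t in Ioo 0 x, f t ^ (p - 1) * u t)) '' Ioo x₀ x₁)
      ((∫ s in Ioo x₀ D, v s ^ (1 - pstar)) ^ (p - 1) * (∫ t in Ioo 0 x₀, u t)) := by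
  have hp0 : p ≠ 0 := by positivity
  have hps0 : pstar ≠ 0 := by
    intro h
    rw [h] at hconj
    simp only [div_zero, add_zero] at hconj
    have : p = 1 := by field_simp at hconj; linarith
    linarith
  have hkey : (1 - pstar) * (p - 1) = -1 := by
    field_simp at hconj
    linear_combination hconj
  -- nonnegativity of the inner integral
  have hg0 : ∀ t : ℝ, 0 ≤ t → 0 ≤ ∫ s in Ioo t D, v s ^ (1 - pstar) := fun t ht =>
    setIntegral_nonneg measurableSet_Ioo fun s hs =>
      Real.rpow_nonneg (hv s ⟨lt_of_le_of_lt ht hs.1, hs.2⟩).le _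
  -- splitting of the inner integral
  have hsplit : ∀ t, x₀ ≤ t → t < D →
      (∫ s in Ioo x₀ D, v s ^ (1 - pstar))
        = (∫ s in Ioc x₀ t, v s ^ (1 - pstar)) + ∫ s in Ioo t D, v s ^ (1 - pstar) := by
    intro t ht htD
    have hunion : Ioc x₀ t ∪ Ioo t D = Ioo x₀ D := Ioc_union_Ioo_eq_Ioo ht htD
    have hdisj : Disjoint (Ioc x₀ t) (Ioo t D) :=
      disjoint_left.mpr fun a ha ha' => absurd ha'.1 (not_lt.mpr ha.2)
    have h1 : IntegrableOn (fun s => v s ^ (1 - pstar)) (Ioc x₀ t) :=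
      hvI.mono_set (by rw [← hunion]; exact subset_union_left)
    have h2 : IntegrableOn (fun s => v s ^ (1 - pstar)) (Ioo t D) :=
      hvI.mono_set (by rw [← hunion]; exact subset_union_right)
    rw [← hunion, setIntegral_union hdisj measurableSet_Ioo h1 h2]
  have hgmono : ∀ t, x₀ ≤ t → t < D →
      (∫ s in Ioo t D, v s ^ (1 - pstar)) ≤ ∫ s in Ioo x₀ D, v s ^ (1 - pstar) := by
    intro t ht htD
    have hpos : 0 ≤ ∫ s in Ioc x₀ t, v s ^ (1 - pstar) :=
      setIntegral_nonneg measurableSet_Ioc fun s hs =>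
        Real.rpow_nonneg (hv s ⟨lt_of_le_of_lt hx₀ hs.1, lt_of_le_of_lt hs.2 htD⟩).le _
    have := hsplit t ht htD
    linarith
  -- the coefficient is 1
  have hcoef : ∀ x ∈ Ioo x₀ x₁,
      (-(1 / (v x * (-(v x ^ (1 - pstar))) * |(-(v x ^ (1 - pstar)))| ^ (p - 2)))) = 1 := by
    intro x hx
    have hvx : 0 < v x := hv x ⟨lt_of_le_of_lt hx₀ hx.1, lt_of_lt_of_le hx.2 hx₁D⟩
    have ha : 0 < v x ^ (1 - pstar) := Real.rpow_pos_of_pos hvx _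
    rw [abs_neg, abs_of_pos ha]
    have h2 : (v x ^ (1 - pstar)) * (v x ^ (1 - pstar)) ^ (p - 2)
        = (v x ^ (1 - pstar)) ^ (p - 1) := by
      rw [show p - 1 = 1 + (p - 2) by ring, Real.rpow_add ha, Real.rpow_one]
    have h3 : (v x ^ (1 - pstar)) ^ (p - 1) = (v x)⁻¹ := by
      rw [← Real.rpow_mul hvx.le, hkey, Real.rpow_neg_one]
    have h1 : v x * (-(v x ^ (1 - pstar))) * (v x ^ (1 - pstar)) ^ (p - 2) = -1 := by
      calc v x * (-(v x ^ (1 - pstar))) * (v x ^ (1 - pstar)) ^ (p - 2)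
          = -(v x * ((v x ^ (1 - pstar)) * (v x ^ (1 - pstar)) ^ (p - 2))) := by ring
        _ = -(v x * (v x)⁻¹) := by rw [h2, h3]
        _ = -1 := by rw [mul_inv_cancel₀ (ne_of_gt hvx)]
    rw [h1]
    norm_num
  -- integrability of G on (x₀, x₁)
  have hsub01 : Ioo x₀ x₁ ⊆ Ioo 0 x₁ := fun t ht => ⟨lt_of_le_of_lt hx₀ ht.1, ht.2⟩
  have huI' : IntegrableOn u (Ioo x₀ x₁) := huI.mono_set hsub01
  have hvIcc : IntegrableOn (fun s => v s ^ (1 - pstar)) (Icc x₀ x₁) := by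
    rw [integrableOn_Icc_iff_integrableOn_Ioo]
    exact hvI.mono_set (Ioo_subset_Ioo_right hx₁D)
  have hPcont : ContinuousOn (fun x => ∫ s in Ioc x₀ x, v s ^ (1 - pstar)) (Icc x₀ x₁) :=
    intervalIntegral.continuousOn_primitive hvIcc
  have hgrep : ∀ t ∈ Ioo x₀ x₁,
      (∫ s in Ioo t D, v s ^ (1 - pstar))
        = (∫ s in Ioo x₀ D, v s ^ (1 - pstar)) - ∫ s in Ioc x₀ t, v s ^ (1 - pstar) := by
    intro t ht
    have := hsplit t ht.1.le (lt_of_lt_of_le ht.2 hx₁D)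
    linarith
  have hGaesm : AEStronglyMeasurable
      (fun t => (∫ s in Ioo t D, v s ^ (1 - pstar)) ^ (p - 1) * u t)
      (volume.restrict (Ioo x₀ x₁)) := by
    have h1 : ContinuousOn (fun t => ((∫ s in Ioo x₀ D, v s ^ (1 - pstar))
        - ∫ s in Ioc x₀ t, v s ^ (1 - pstar)) ^ (p - 1)) (Icc x₀ x₁) := by
      apply ContinuousOn.rpow_const (continuousOn_const.sub hPcont)
      intro t _; right; linarith
    have h2 : AEStronglyMeasurable (fun t => ((∫ s in Ioo x₀ D, v s ^ (1 - pstar))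
        - ∫ s in Ioc x₀ t, v s ^ (1 - pstar)) ^ (p - 1))
        (volume.restrict (Ioo x₀ x₁)) :=
      (h1.aestronglyMeasurable measurableSet_Icc).mono_measure
        (Measure.restrict_mono Ioo_subset_Icc_self le_rfl)
    refine (h2.mul huI'.aestronglyMeasurable).congr ?_
    filter_upwards [ae_restrict_mem measurableSet_Ioo] with t ht
    simp only [Pi.mul_apply]
    rw [hgrep t ht]
  have hGint : IntegrableOn
      (fun t => (∫ s in Ioo t D, v s ^ (1 - pstar)) ^ (p - 1) * u t) (Ioo x₀ x₁) := by
    apply Integrable.mono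
      (huI'.const_mul ((∫ s in Ioo x₀ D, v s ^ (1 - pstar)) ^ (p - 1))) hGaesm
    filter_upwards [ae_restrict_mem measurableSet_Ioo] with t ht
    have h0 : 0 ≤ ∫ s in Ioo t D, v s ^ (1 - pstar) := hg0 t (le_trans hx₀ ht.1.le)
    have h1 : (∫ s in Ioo t D, v s ^ (1 - pstar)) ^ (p - 1)
        ≤ (∫ s in Ioo x₀ D, v s ^ (1 - pstar)) ^ (p - 1) :=
      Real.rpow_le_rpow h0 (hgmono t ht.1.le (lt_of_lt_of_le ht.2 hx₁D)) (by linarith)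
    simp only [norm_mul, Real.norm_eq_abs, abs_of_nonneg (Real.rpow_nonneg h0 (p-1)),
      abs_of_nonneg (Real.rpow_nonneg (hg0 x₀ hx₀) (p-1))]
    exact mul_le_mul_of_nonneg_right h1 (abs_nonneg _)
  -- main identity
  have hmain : ∀ x ∈ Ioo x₀ x₁,
      (∫ t in Ioo 0 x, f t ^ (p - 1) * u t)
        = (∫ s in Ioo x₀ D, v s ^ (1 - pstar)) ^ (p - 1) * (∫ t in Ioo 0 x₀, u t)
          + ∫ t in Ioo x₀ x, (∫ s in Ioo t D, v s ^ (1 - pstar)) ^ (p - 1) * u t := by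
    intro x hx
    have hunion : Ioc 0 x₀ ∪ Ioo x₀ x = Ioo 0 x := Ioc_union_Ioo_eq_Ioo hx₀ hx.1
    have hdisj : Disjoint (Ioc 0 x₀) (Ioo x₀ x) :=
      disjoint_left.mpr fun a ha ha' => absurd ha'.1 (not_lt.mpr ha.2)
    have hf1 : EqOn (fun t => f t ^ (p - 1) * u t)
        (fun t => (∫ s in Ioo x₀ D, v s ^ (1 - pstar)) ^ (p - 1) * u t) (Ioc 0 x₀) := by
      intro t ht
      simp only
      rw [hf t, if_pos (lt_of_le_of_lt ht.2 hx01), max_eq_right ht.2]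
    have hf2 : EqOn (fun t => f t ^ (p - 1) * u t)
        (fun t => (∫ s in Ioo t D, v s ^ (1 - pstar)) ^ (p - 1) * u t) (Ioo x₀ x) := by
      intro t ht
      simp only
      rw [hf t, if_pos (lt_trans ht.2 hx.2), max_eq_left ht.1.le]
    have hIu : IntegrableOn u (Ioc 0 x₀) :=
      huI.mono_set (fun t ht => ⟨ht.1, lt_of_le_of_lt ht.2 hx01⟩)
    have hI1 : IntegrableOn (fun t => f t ^ (p - 1) * u t) (Ioc 0 x₀) :=
      IntegrableOn.congr_fun
        (hIu.const_mul ((∫ s in Ioo x₀ D, v s ^ (1 - pstar)) ^ (p - 1)))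
        hf1.symm measurableSet_Ioc
    have hI2 : IntegrableOn (fun t => f t ^ (p - 1) * u t) (Ioo x₀ x) :=
      IntegrableOn.congr_fun (hGint.mono_set (Ioo_subset_Ioo_right hx.2.le))
        hf2.symm measurableSet_Ioo
    rw [← hunion, setIntegral_union hdisj measurableSet_Ioo hI1 hI2,
      setIntegral_congr_fun measurableSet_Ioc hf1,
      setIntegral_congr_fun measurableSet_Ioo hf2,
      integral_const_mul, integral_Ioc_eq_integral_Ioo]
  refine ⟨fun x hx => by rw [hcoef x hx, one_mul, hmain x hx], ?_, ?_⟩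
  · rintro y ⟨x, hx, rfl⟩
    simp only
    rw [hcoef x hx, one_mul, hmain x hx]
    have h0 : 0 ≤ ∫ t in Ioo x₀ x, (∫ s in Ioo t D, v s ^ (1 - pstar)) ^ (p - 1) * u t :=
      setIntegral_nonneg measurableSet_Ioo fun t ht =>
        mul_nonneg (Real.rpow_nonneg (hg0 t (le_trans hx₀ ht.1.le)) _)
          (hu t ⟨lt_of_le_of_lt hx₀ ht.1,
            lt_of_lt_of_le (lt_trans ht.2 hx.2) hx₁D⟩).le
    linarith
  · intro b hb
    have hGicc : IntegrableOn
        (fun t => (∫ s in Ioo t D, v s ^ (1 - pstar)) ^ (p - 1) * u t) (Icc x₀ x₁) := by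
      rw [integrableOn_Icc_iff_integrableOn_Ioo]; exact hGint
    have hQ : ContinuousOn
        (fun x => ∫ t in Ioc x₀ x, (∫ s in Ioo t D, v s ^ (1 - pstar)) ^ (p - 1) * u t)
        (Icc x₀ x₁) := intervalIntegral.continuousOn_primitive hGicc
    haveI hne : (𝓝[Ioo x₀ x₁] x₀).NeBot := by
      rw [nhdsWithin_Ioo_eq_nhdsGT hx01]
      infer_instance
    have hQ0 : Tendsto
        (fun x => ∫ t in Ioc x₀ x, (∫ s in Ioo t D, v s ^ (1 - pstar)) ^ (p - 1) * u t)
        (𝓝[Ioo x₀ x₁] x₀) (𝓝 0) := by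
      have h1 := hQ x₀ (left_mem_Icc.mpr hx01.le)
      have h2 : (∫ t in Ioc x₀ x₀, (∫ s in Ioo t D, v s ^ (1 - pstar)) ^ (p - 1) * u t) = 0 := by
        simp
      rw [ContinuousWithinAt, h2] at h1
      exact h1.mono_left (nhdsWithin_mono _ Ioo_subset_Icc_self)
    have hQ0' : Tendsto
        (fun x => ∫ t in Ioo x₀ x, (∫ s in Ioo t D, v s ^ (1 - pstar)) ^ (p - 1) * u t)
        (𝓝[Ioo x₀ x₁] x₀) (𝓝 0) :=
      hQ0.congr fun x => integral_Ioc_eq_integral_Ioo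
    have hev : ∀ᶠ x in 𝓝[Ioo x₀ x₁] x₀,
        b ≤ (∫ s in Ioo x₀ D, v s ^ (1 - pstar)) ^ (p - 1) * (∫ t in Ioo 0 x₀, u t)
          + ∫ t in Ioo x₀ x, (∫ s in Ioo t D, v s ^ (1 - pstar)) ^ (p - 1) * u t := by
      filter_upwards [eventually_mem_nhdsWithin] with x hx
      have hbx := hb ⟨x, hx, rfl⟩
      simp only at hbx
      rw [hcoef x hx, one_mul, hmain x hx] at hbx
      exact hbx
    have := ge_of_tendsto (tendsto_const_nhds.add hQ0') hev
    simpa using this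
end

section
/- Let p > 1 and suppose ν̂(t,x) = ∫_t^x v̂ < ∞ for x₀ ≤ t ≤ x < y ≤ D. Then for all t ∈ [x₀, x], (ν̂(t,y)/ν̂(t,x))^p ≥ ν̂(x₀,y)/ν̂(x₀,x). Consequently, the function x₁ ↦ μ(0,x₀) ν̂(x₀,x₁)^(p-1) + (1/ν̂(x₀,x₁)) ∫_{x₀}^{x₁} ν̂(s,x₁)^p μ(ds) is increasing in x₁ ∈ (x₀, D). -/
open MeasureTheory Set

/-- Monotonicity lemma: `(ν̂(t,y)/ν̂(t,x))^p ≥ ν̂(x₀,y)/ν̂(x₀,x)` for `t ∈ [x₀,x)`,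
and consequently `x₁ ↦ μ(0,x₀) ν̂(x₀,x₁)^(p-1) + ν̂(x₀,x₁)⁻¹ ∫_{x₀}^{x₁} ν̂(s,x₁)^p μ(ds)`
is increasing on `(x₀, D)`. -/
theorem stmt7 (p D x₀ : ℝ) (hp : 1 < p) (hD : 0 < D) (hx₀ : x₀ ∈ Ioo (0:ℝ) D)
    (u w : ℝ → ℝ)
    (hu : ∀ s ∈ Ioo (0:ℝ) D, 0 ≤ u s) (hw : ∀ s ∈ Ioo (0:ℝ) D, 0 < w s)
    (hwI : ∀ a b : ℝ, 0 < a → b ≤ D → IntegrableOn w (Ioo a b))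
    (huI : ∀ b : ℝ, b ≤ D → IntegrableOn u (Ioo 0 b)) :
    (∀ x y : ℝ, x₀ ≤ x → x < y → y ≤ D → ∀ t ∈ Ico x₀ x,
      (∫ s in Ioo x₀ y, w s) / (∫ s in Ioo x₀ x, w s)
        ≤ ((∫ s in Ioo t y, w s) / (∫ s in Ioo t x, w s)) ^ p)
    ∧ MonotoneOn (fun x₁ =>
        (∫ t in Ioo 0 x₀, u t) * (∫ s in Ioo x₀ x₁, w s) ^ (p - 1)
          + (∫ s in Ioo x₀ x₁, w s)⁻¹ *
            ∫ s in Ioo x₀ x₁, (∫ z in Ioo s x₁, w z) ^ p * u s)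
      (Ioo x₀ D) := by
  obtain ⟨hx₀0, hx₀D⟩ := hx₀
  have hp0 : (0:ℝ) < p := lt_trans one_pos hp
  have hwI' : ∀ a b : ℝ, 0 < a → a ≤ b → b ≤ D → IntervalIntegrable w volume a b := by
    intro a b ha hab hbD
    exact (intervalIntegrable_iff_integrableOn_Ioo_of_le hab).mpr (hwI a b ha hbD)
  have hν0 : ∀ a b : ℝ, 0 < a → b ≤ D → 0 ≤ ∫ s in Ioo a b, w s := by
    intro a b ha hbD
    exact setIntegral_nonneg measurableSet_Ioo fun s hs =>
      (hw s ⟨ha.trans hs.1, hs.2.trans_le hbD⟩).le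
  have hνpos : ∀ a b : ℝ, 0 < a → a < b → b ≤ D → 0 < ∫ s in Ioo a b, w s := by
    intro a b ha hab hbD
    have hnn : 0 ≤ᵐ[volume.restrict (Ioo a b)] w :=
      (ae_restrict_iff' measurableSet_Ioo).mpr
        (ae_of_all _ fun s hs => (hw s ⟨ha.trans hs.1, hs.2.trans_le hbD⟩).le)
    rw [setIntegral_pos_iff_support_of_nonneg_ae hnn (hwI a b ha hbD)]
    have hsub : Ioo a b ⊆ Function.support w := fun s hs =>
      ne_of_gt (hw s ⟨ha.trans hs.1, hs.2.trans_le hbD⟩)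
    rw [inter_eq_right.mpr hsub, Real.volume_Ioo]
    exact ENNReal.ofReal_pos.mpr (by linarith)
  have hadd : ∀ a b c : ℝ, 0 < a → a ≤ b → b ≤ c → c ≤ D →
      (∫ s in Ioo a c, w s) = (∫ s in Ioo a b, w s) + ∫ s in Ioo b c, w s := by
    intro a b c ha hab hbc hcD
    have h1 := hwI' a b ha hab (hbc.trans hcD)
    have h2 := hwI' b c (ha.trans_le hab) hbc hcD
    have h3 := intervalIntegral.integral_add_adjacent_intervals h1 h2
    rw [intervalIntegral.integral_of_le hab, intervalIntegral.integral_of_le hbc,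
      intervalIntegral.integral_of_le (hab.trans hbc), integral_Ioc_eq_integral_Ioo,
      integral_Ioc_eq_integral_Ioo, integral_Ioc_eq_integral_Ioo] at h3
    linarith
  have part1 : ∀ x y : ℝ, x₀ ≤ x → x < y → y ≤ D → ∀ t ∈ Ico x₀ x,
      (∫ s in Ioo x₀ y, w s) / (∫ s in Ioo x₀ x, w s)
        ≤ ((∫ s in Ioo t y, w s) / (∫ s in Ioo t x, w s)) ^ p := by
    intro x y hx hxy hyD t ht
    obtain ⟨ht₀, htx⟩ := ht
    have h0t : 0 < t := hx₀0.trans_le ht₀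
    have hxD : x ≤ D := hxy.le.trans hyD
    have hb : 0 < ∫ s in Ioo t x, w s := hνpos t x h0t htx hxD
    have hc : 0 ≤ ∫ s in Ioo x y, w s := hν0 x y (hx₀0.trans_le hx) hyD
    have ha : 0 ≤ ∫ s in Ioo x₀ t, w s := hν0 x₀ t hx₀0 (htx.le.trans hxD)
    have e1 : (∫ s in Ioo t y, w s) = (∫ s in Ioo t x, w s) + ∫ s in Ioo x y, w s :=
      hadd t x y h0t htx.le hxy.le hyD
    have e2 : (∫ s in Ioo x₀ y, w s) = (∫ s in Ioo x₀ t, w s) + ∫ s in Ioo t y, w s :=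
      hadd x₀ t y hx₀0 ht₀ (htx.le.trans hxy.le) hyD
    have e3 : (∫ s in Ioo x₀ x, w s) = (∫ s in Ioo x₀ t, w s) + ∫ s in Ioo t x, w s :=
      hadd x₀ t x hx₀0 ht₀ htx.le hxD
    have key1 : (∫ s in Ioo x₀ y, w s) / (∫ s in Ioo x₀ x, w s)
        ≤ (∫ s in Ioo t y, w s) / (∫ s in Ioo t x, w s) := by
      rw [e1, e2, e3, div_le_div_iff₀ (by linarith) hb]
      nlinarith [mul_nonneg ha hc]
    have key2 : (1:ℝ) ≤ (∫ s in Ioo t y, w s) / (∫ s in Ioo t x, w s) := by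
      rw [le_div_iff₀ hb]; nlinarith
    calc (∫ s in Ioo x₀ y, w s) / (∫ s in Ioo x₀ x, w s)
        ≤ (∫ s in Ioo t y, w s) / (∫ s in Ioo t x, w s) := key1
      _ = ((∫ s in Ioo t y, w s) / (∫ s in Ioo t x, w s)) ^ (1:ℝ) := (Real.rpow_one _).symm
      _ ≤ _ := Real.rpow_le_rpow_of_exponent_le key2 hp.le
  refine ⟨part1, ?_⟩
  -- integrability of the integrand
  have hgI : ∀ b : ℝ, x₀ < b → b ≤ D →
      IntegrableOn (fun s => (∫ z in Ioo s b, w z) ^ p * u s) (Ioo x₀ b) := by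
    intro b hb hbD
    have hwb : IntegrableOn w (uIcc x₀ b) := by
      rw [uIcc_of_le hb.le]
      exact (integrableOn_Icc_iff_integrableOn_Ioo).mpr (hwI x₀ b hx₀0 hbD)
    have hFc : ContinuousOn (fun s => ∫ z in s..b, w z) (uIcc x₀ b) :=
      intervalIntegral.continuousOn_primitive_interval_left hwb
    have hmeas : AEStronglyMeasurable (fun s => (∫ z in Ioo s b, w z) ^ p * u s)
        (volume.restrict (Ioo x₀ b)) := by
      have hsub : Ioo x₀ b ⊆ uIcc x₀ b := by
        rw [uIcc_of_le hb.le]; exact Ioo_subset_Icc_self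
      have h1 : AEStronglyMeasurable (fun s => (∫ z in s..b, w z) ^ p)
          (volume.restrict (Ioo x₀ b)) := by
        have hc : ContinuousOn (fun s => (∫ z in s..b, w z) ^ p) (uIcc x₀ b) :=
          (Real.continuous_rpow_const hp0.le).comp_continuousOn hFc
        exact (hc.aestronglyMeasurable measurableSet_uIcc).mono_measure
          (Measure.restrict_mono hsub le_rfl)
      have h2 : AEStronglyMeasurable u (volume.restrict (Ioo x₀ b)) :=
        (huI b hbD).aestronglyMeasurable.mono_measure
          (Measure.restrict_mono (Ioo_subset_Ioo hx₀0.le le_rfl) le_rfl)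
      refine (h1.mul h2).congr ?_
      filter_upwards [ae_restrict_mem measurableSet_Ioo] with s hs
      simp only [Pi.mul_apply]
      rw [intervalIntegral.integral_of_le hs.2.le, integral_Ioc_eq_integral_Ioo]
    refine Integrable.mono'
      (((huI b hbD).mono_set (Ioo_subset_Ioo hx₀0.le le_rfl)).const_mul
        ((∫ z in Ioo x₀ b, w z) ^ p)) hmeas ?_
    filter_upwards [ae_restrict_mem measurableSet_Ioo] with s hs
    have h0s : 0 < s := hx₀0.trans hs.1
    have hus : 0 ≤ u s := hu s ⟨h0s, hs.2.trans_le hbD⟩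
    have hsb : 0 ≤ ∫ z in Ioo s b, w z := hν0 s b h0s hbD
    have hle : (∫ z in Ioo s b, w z) ≤ ∫ z in Ioo x₀ b, w z := by
      have e := hadd x₀ s b hx₀0 hs.1.le hs.2.le hbD
      have h := hν0 x₀ s hx₀0 (hs.2.le.trans hbD)
      linarith
    rw [Real.norm_eq_abs, abs_of_nonneg (mul_nonneg (Real.rpow_nonneg hsb p) hus)]
    exact mul_le_mul_of_nonneg_right (Real.rpow_le_rpow hsb hle hp0.le) hus
  intro x hx y hy hxy
  rcases eq_or_lt_of_le hxy with rfl | hlt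
  · exact le_refl _
  dsimp only
  have hyD : y ≤ D := hy.2.le
  have hxD : x ≤ D := hx.2.le
  have hNx : 0 < ∫ s in Ioo x₀ x, w s := hνpos x₀ x hx₀0 hx.1 hxD
  have hNy : 0 < ∫ s in Ioo x₀ y, w s := hνpos x₀ y hx₀0 hy.1 hyD
  have hNxy : (∫ s in Ioo x₀ x, w s) ≤ ∫ s in Ioo x₀ y, w s := by
    have e := hadd x₀ x y hx₀0 hx.1.le hlt.le hyD
    have h := hν0 x y (hx₀0.trans hx.1) hyD
    linarith
  have hA : 0 ≤ ∫ t in Ioo 0 x₀, u t :=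
    setIntegral_nonneg measurableSet_Ioo fun s hs => hu s ⟨hs.1, hs.2.trans hx₀D⟩
  have term1 : (∫ t in Ioo 0 x₀, u t) * (∫ s in Ioo x₀ x, w s) ^ (p - 1)
      ≤ (∫ t in Ioo 0 x₀, u t) * (∫ s in Ioo x₀ y, w s) ^ (p - 1) :=
    mul_le_mul_of_nonneg_left (Real.rpow_le_rpow hNx.le hNxy (by linarith)) hA
  have hIx := hgI x hx.1 hxD
  have hIy := hgI y hy.1 hyD
  have hIyx : IntegrableOn (fun s => (∫ z in Ioo s y, w z) ^ p * u s) (Ioo x₀ x) :=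
    hIy.mono_set (Ioo_subset_Ioo le_rfl hlt.le)
  have hpt : ∀ s ∈ Ioo x₀ x,
      (∫ z in Ioo s x, w z) ^ p * u s
        ≤ ((∫ s in Ioo x₀ x, w s) / (∫ s in Ioo x₀ y, w s))
            * ((∫ z in Ioo s y, w z) ^ p * u s) := by
    intro s hs
    have h0s : 0 < s := hx₀0.trans hs.1
    have hbx : 0 < ∫ z in Ioo s x, w z := hνpos s x h0s hs.2 hxD
    have hby : 0 ≤ ∫ z in Ioo s y, w z := hν0 s y h0s hyD
    have h1 := part1 x y hx.1.le hlt hyD s ⟨hs.1.le, hs.2⟩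
    rw [Real.div_rpow hby hbx.le] at h1
    have hbxp : 0 < (∫ z in Ioo s x, w z) ^ p := Real.rpow_pos_of_pos hbx p
    rw [div_le_div_iff₀ hNx hbxp] at h1
    have hus : 0 ≤ u s := hu s ⟨h0s, (hs.2.trans_le hxD)⟩
    rw [div_mul_eq_mul_div, le_div_iff₀ hNy]
    nlinarith [mul_le_mul_of_nonneg_right h1 hus]
  have step1 : (∫ s in Ioo x₀ x, (∫ z in Ioo s x, w z) ^ p * u s)
      ≤ ∫ s in Ioo x₀ x, ((∫ s in Ioo x₀ x, w s) / (∫ s in Ioo x₀ y, w s))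
          * ((∫ z in Ioo s y, w z) ^ p * u s) :=
    setIntegral_mono_on hIx (hIyx.const_mul _) measurableSet_Ioo hpt
  rw [integral_const_mul] at step1
  have step2 : (∫ s in Ioo x₀ x, (∫ z in Ioo s y, w z) ^ p * u s)
      ≤ ∫ s in Ioo x₀ y, (∫ z in Ioo s y, w z) ^ p * u s := by
    refine setIntegral_mono_set hIy ?_
      (HasSubset.Subset.eventuallyLE (Ioo_subset_Ioo le_rfl hlt.le))
    filter_upwards [ae_restrict_mem measurableSet_Ioo] with s hs
    exact mul_nonneg (Real.rpow_nonneg (hν0 s y (hx₀0.trans hs.1) hyD) p)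
      (hu s ⟨hx₀0.trans hs.1, hs.2.trans_le hyD⟩)
  have hfrac : 0 ≤ (∫ s in Ioo x₀ x, w s) / (∫ s in Ioo x₀ y, w s) :=
    div_nonneg hNx.le hNy.le
  have term2 : (∫ s in Ioo x₀ x, w s)⁻¹ * ∫ s in Ioo x₀ x, (∫ z in Ioo s x, w z) ^ p * u s
      ≤ (∫ s in Ioo x₀ y, w s)⁻¹ * ∫ s in Ioo x₀ y, (∫ z in Ioo s y, w z) ^ p * u s := by
    have h2 : (∫ s in Ioo x₀ x, (∫ z in Ioo s x, w z) ^ p * u s)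
        ≤ ((∫ s in Ioo x₀ x, w s) / (∫ s in Ioo x₀ y, w s))
            * ∫ s in Ioo x₀ y, (∫ z in Ioo s y, w z) ^ p * u s :=
      step1.trans (mul_le_mul_of_nonneg_left step2 hfrac)
    calc (∫ s in Ioo x₀ x, w s)⁻¹ * ∫ s in Ioo x₀ x, (∫ z in Ioo s x, w z) ^ p * u s
        ≤ (∫ s in Ioo x₀ x, w s)⁻¹ * (((∫ s in Ioo x₀ x, w s) / (∫ s in Ioo x₀ y, w s))
            * ∫ s in Ioo x₀ y, (∫ z in Ioo s y, w z) ^ p * u s) :=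
          mul_le_mul_of_nonneg_left h2 (inv_nonneg.mpr hNx.le)
      _ = (∫ s in Ioo x₀ y, w s)⁻¹ * ∫ s in Ioo x₀ y, (∫ z in Ioo s y, w z) ^ p * u s := by
          field_simp
  linarith
end

section
/- Assume σ_p = sup_{x∈(0,D)} μ(0,x) ν̂(x,D)^(p-1) < ∞ and ν̂(x,D) < ∞ for all x ∈ (0,D). Define δ̄₁ = sup_{x∈(0,D)} [ μ(0,x) ν̂(x,D)^(p-1) + (1/ν̂(x,D)) ∫_x^D ν̂(t,D)^p μ(dt) ]. Then σ_p ≤ δ̄₁ ≤ p σ_p. -/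
open MeasureTheory Set
open scoped ENNReal NNReal

lemma integral_pos_aux (a b : ℝ) (hab : a < b) (w : ℝ → ℝ)
    (hw : ∀ s ∈ Ioo a b, 0 < w s) (hwI : IntegrableOn w (Ioo a b)) :
    0 < ∫ s in Ioo a b, w s := by
  rw [setIntegral_pos_iff_support_of_nonneg_ae
    (ae_restrict_of_forall_mem measurableSet_Ioo fun r hr => (hw r hr).le) hwI]
  have hss : Ioo a b ⊆ Function.support w ∩ Ioo a b := fun r hr => ⟨ne_of_gt (hw r hr), hr⟩
  calc (0:ℝ≥0∞) < volume (Ioo a b) := by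
        rw [Real.volume_Ioo]; exact ENNReal.ofReal_pos.2 (by linarith)
    _ ≤ _ := measure_mono hss

lemma keyA (p D t : ℝ) (hp : 1 < p) (w : ℝ → ℝ) (htD : t < D)
    (hw : ∀ s ∈ Ioo t D, 0 < w s) (hwI : IntegrableOn w (Ioo t D)) :
    ∫ s in Ioo t D, (∫ r in Ioo s D, w r) ^ (p - 1) * w s
      = (∫ s in Ioo t D, w s) ^ p / p := by
  set A : ℝ := ∫ s in Ioo t D, w s with hA
  set F : ℝ → ℝ := fun s => ∫ r in Ioo (max s t) D, w r with hF
  have hwnn : 0 ≤ᵐ[volume.restrict (Ioo t D)] w :=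
    ae_restrict_of_forall_mem measurableSet_Ioo fun s hs => (hw s hs).le
  have hsubI : ∀ {S : Set ℝ}, S ⊆ Ioo t D → IntegrableOn w S := fun h => hwI.mono_set h
  have hsub : ∀ s : ℝ, Ioo (max s t) D ⊆ Ioo t D := fun s =>
    Ioo_subset_Ioo (le_max_right s t) le_rfl
  have hFleA : ∀ s, F s ≤ A := fun s =>
    setIntegral_mono_set hwI hwnn ((hsub s).eventuallyLE)
  have hF0 : ∀ s, 0 ≤ F s := fun s =>
    setIntegral_nonneg measurableSet_Ioo fun r hr => (hw r (hsub s hr)).le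
  have hFanti : Antitone F := by
    intro s1 s2 h
    refine setIntegral_mono_set (hsubI (hsub s1))
      (ae_restrict_of_ae_restrict_of_subset (hsub s1) hwnn)
      (HasSubset.Subset.eventuallyLE ?_)
    exact Ioo_subset_Ioo (max_le_max h le_rfl) le_rfl
  have hFval : ∀ s, t ≤ s → F s = ∫ r in Ioo s D, w r := by
    intro s hs; simp only [hF, max_eq_left hs]
  have hFt : F t = A := by rw [hFval t le_rfl]
  have hFD : F D = 0 := by rw [hFval D htD.le, Ioo_self]; simp
  -- strict decrease
  have hstrict : ∀ s1, t ≤ s1 → ∀ s2, s1 < s2 → s2 < D → F s2 < F s1 := by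
    intro s1 hs1 s2 h12 h2D
    rw [hFval s1 hs1, hFval s2 (hs1.trans h12.le)]
    have hsub1 : Ioc s1 s2 ⊆ Ioo t D := fun r hr =>
      ⟨lt_of_le_of_lt hs1 hr.1, lt_of_le_of_lt hr.2 h2D⟩
    have hsub2 : Ioo s2 D ⊆ Ioo t D := Ioo_subset_Ioo (hs1.trans h12.le) le_rfl
    have hdisj : Disjoint (Ioc s1 s2) (Ioo s2 D) := by
      apply Set.disjoint_left.2
      rintro r ⟨_, hr2⟩ ⟨hr3, _⟩; exact absurd hr3 (not_lt.2 hr2)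
    have hun : Ioc s1 s2 ∪ Ioo s2 D = Ioo s1 D := Ioc_union_Ioo_eq_Ioo h12.le h2D
    have hsplit : ∫ r in Ioo s1 D, w r
        = (∫ r in Ioc s1 s2, w r) + ∫ r in Ioo s2 D, w r := by
      rw [← hun, setIntegral_union hdisj measurableSet_Ioo (hsubI hsub1) (hsubI hsub2)]
    have hpos : 0 < ∫ r in Ioc s1 s2, w r := by
      rw [integral_Ioc_eq_integral_Ioo]
      have hsub3 : Ioo s1 s2 ⊆ Ioo t D := fun r hr => hsub1 ⟨hr.1, hr.2.le⟩
      rw [setIntegral_pos_iff_support_of_nonneg_ae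
        (ae_restrict_of_forall_mem measurableSet_Ioo fun r hr => (hw r (hsub3 hr)).le)
        (hsubI hsub3)]
      have hss : Ioo s1 s2 ⊆ Function.support w ∩ Ioo s1 s2 := fun r hr =>
        ⟨ne_of_gt (hw r (hsub3 hr)), hr⟩
      calc (0:ℝ≥0∞) < volume (Ioo s1 s2) := by
            rw [Real.volume_Ioo]; exact ENNReal.ofReal_pos.2 (by linarith [h12])
        _ ≤ _ := measure_mono hss
    linarith [hsplit, hpos]
  have hFpos : ∀ s ∈ Ioo t D, 0 < F s := by
    intro s hs
    have := hstrict s hs.1.le ((s + D)/2) (by linarith [hs.2]) (by linarith [hs.2])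
    exact lt_of_le_of_lt (hF0 _) this
  have hA0 : 0 < A := by
    have h1 := hstrict t le_rfl ((t + D)/2) (by linarith) (by linarith)
    have h2 := hFpos ((t + D)/2) ⟨by linarith, by linarith⟩
    rw [hFt] at h1; linarith
  -- continuity and IVT
  have hivt : ∀ c ∈ Ioo (0:ℝ) A, ∃ s₀ ∈ Ioo t D, F s₀ = c := by
    have hwInd : Integrable ((Ioo t D).indicator w) := hwI.integrable_indicator measurableSet_Ioo
    have hprimc : Continuous (fun s => ∫ r in t..s, (Ioo t D).indicator w r) :=
      hwInd.continuous_primitive t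
    have hFeq : ∀ s ∈ Icc t D, F s = A - ∫ r in t..s, (Ioo t D).indicator w r := by
      intro s hs
      rw [intervalIntegral.integral_of_le hs.1, setIntegral_indicator measurableSet_Ioo]
      have hseteq : Ioc t s ∩ Ioo t D = Ioo t D \ Ioo s D := by
        ext r
        constructor
        · rintro ⟨⟨h1, h2⟩, h3⟩
          exact ⟨h3, fun hr => absurd hr.1 (not_lt.2 h2)⟩
        · rintro ⟨⟨h1, h2⟩, h3⟩
          refine ⟨⟨h1, ?_⟩, h1, h2⟩
          by_contra hcon
          exact h3 ⟨lt_of_not_ge hcon, h2⟩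
      rw [hseteq]
      have hsplit : A = (∫ r in Ioo t D \ Ioo s D, w r) + ∫ r in Ioo s D, w r := by
        rw [hA, ← setIntegral_union disjoint_sdiff_left measurableSet_Ioo
          (hsubI diff_subset) (hsubI (Ioo_subset_Ioo hs.1 le_rfl)),
          diff_union_of_subset (Ioo_subset_Ioo hs.1 le_rfl)]
      rw [hFval s hs.1]
      linarith [hsplit]
    have hcont : ContinuousOn F (Icc t D) :=
      ((continuous_const.sub hprimc).continuousOn).congr hFeq
    intro c hc
    have hsub2 := intermediate_value_Ioo' htD.le hcont
    rw [hFD, hFt] at hsub2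
    obtain ⟨s₀, hs₀, hFs₀⟩ := hsub2 hc
    exact ⟨s₀, hs₀, hFs₀⟩
  -- the pushforward measure
  have hFmeas : Measurable F := hFanti.measurable
  have hwaem : AEMeasurable w (volume.restrict (Ioo t D)) :=
    hwI.aestronglyMeasurable.aemeasurable
  set ρ : Measure ℝ :=
    (volume.restrict (Ioo t D)).withDensity (fun s => ENNReal.ofReal (w s)) with hρ
  have hρS : ∀ S : Set ℝ, MeasurableSet S →
      ρ S = ∫⁻ s in S ∩ Ioo t D, ENNReal.ofReal (w s) ∂volume := by
    intro S hS
    rw [hρ, withDensity_apply _ hS, Measure.restrict_restrict hS]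
  have hρval : ∀ S : Set ℝ, MeasurableSet S → S ⊆ Ioo t D →
      ρ S = ENNReal.ofReal (∫ r in S, w r) := by
    intro S hS hSsub
    rw [hρS S hS, inter_eq_self_of_subset_left hSsub]
    exact (ofReal_integral_eq_lintegral_ofReal (hsubI hSsub)
      (ae_restrict_of_forall_mem hS fun r hr => (hw r (hSsub hr)).le)).symm
  have hρuniv : ρ univ = ENNReal.ofReal A := by
    rw [hρS univ MeasurableSet.univ, univ_inter]
    rw [hA]
    exact (ofReal_integral_eq_lintegral_ofReal hwI hwnn).symm
  have hρfin : IsFiniteMeasure ρ := ⟨by rw [hρuniv]; exact ENNReal.ofReal_lt_top⟩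
  have hmap : Measure.map F ρ = volume.restrict (Ioo 0 A) := by
    refine Measure.ext_of_Iic _ _ (fun c => ?_)
    rw [Measure.map_apply hFmeas measurableSet_Iic,
      Measure.restrict_apply measurableSet_Iic]
    rcases le_or_gt A c with hcA | hcA
    · have hpre : F ⁻¹' Iic c = univ := eq_univ_of_forall fun s => (hFleA s).trans hcA
      have hIic : Iic c ∩ Ioo 0 A = Ioo 0 A :=
        inter_eq_self_of_subset_right fun y hy => le_trans hy.2.le hcA
      rw [hpre, hρuniv, hIic, Real.volume_Ioo, sub_zero]
    · rcases le_or_gt c 0 with hc0 | hc0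
      · have hpre : F ⁻¹' Iic c ∩ Ioo t D = ∅ := by
          rw [eq_empty_iff_forall_notMem]
          rintro s ⟨hs1, hs2⟩
          exact absurd (le_trans (mem_Iic.1 hs1) hc0) (not_le.2 (hFpos s hs2))
        have hIic : Iic c ∩ Ioo 0 A = ∅ := by
          rw [eq_empty_iff_forall_notMem]
          rintro y ⟨hy1, hy2⟩
          exact absurd (le_trans (mem_Iic.1 hy1) hc0) (not_le.2 hy2.1)
        rw [hρS _ (hFmeas measurableSet_Iic), hpre, hIic]
        simp
      · obtain ⟨s₀, hs₀, hFs₀⟩ := hivt c ⟨hc0, hcA⟩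
        have hpre : F ⁻¹' Iic c ∩ Ioo t D = Ico s₀ D := by
          ext s
          constructor
          · rintro ⟨hs1, hs2⟩
            refine ⟨?_, hs2.2⟩
            by_contra hcon
            have := hstrict s hs2.1.le s₀ (lt_of_not_ge hcon) hs₀.2
            rw [hFs₀] at this
            exact absurd (mem_Iic.1 hs1) (not_le.2 this)
          · rintro ⟨hs1, hs2⟩
            have hsmem : s ∈ Ioo t D := ⟨lt_of_lt_of_le hs₀.1 hs1, hs2⟩
            refine ⟨?_, hsmem⟩
            show F s ≤ c
            calc F s ≤ F s₀ := hFanti hs1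
              _ = c := hFs₀
        have hIic : Iic c ∩ Ioo 0 A = Ioc 0 c := by
          ext y
          constructor
          · rintro ⟨hy1, hy2⟩; exact ⟨hy2.1, hy1⟩
          · rintro ⟨hy1, hy2⟩; exact ⟨hy2, hy1, lt_of_le_of_lt hy2 hcA⟩
        have hIcosub : Ico s₀ D ⊆ Ioo t D := fun r hr => ⟨lt_of_lt_of_le hs₀.1 hr.1, hr.2⟩
        have : ρ (F ⁻¹' Iic c) = ∫⁻ s in Ico s₀ D, ENNReal.ofReal (w s) ∂volume := by
          rw [hρS _ (hFmeas measurableSet_Iic), hpre]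
        rw [this, hIic, Real.volume_Ioc, sub_zero,
          ← ofReal_integral_eq_lintegral_ofReal (hsubI hIcosub)
            (ae_restrict_of_forall_mem measurableSet_Ico fun r hr => (hw r (hIcosub hr)).le)]
        rw [integral_Ico_eq_integral_Ioo, ← hFval s₀ hs₀.1.le, hFs₀]
  -- final computation
  have step1 : ∫ s in Ioo t D, (∫ r in Ioo s D, w r) ^ (p - 1) * w s
      = ∫ s in Ioo t D, F s ^ (p - 1) * w s := by
    refine setIntegral_congr_fun measurableSet_Ioo (fun s hs => ?_)
    rw [hFval s hs.1.le]
  have hg : Measurable fun y : ℝ => y ^ (p - 1) := measurable_id.pow measurable_const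
  have hwnnaem : AEMeasurable (fun s => (w s).toNNReal) (volume.restrict (Ioo t D)) :=
    measurable_real_toNNReal.comp_aemeasurable hwaem
  have step2 : ∫ s, F s ^ (p - 1) ∂ρ = ∫ s in Ioo t D, F s ^ (p - 1) * w s := by
    have : ρ = (volume.restrict (Ioo t D)).withDensity
        (fun s => ((fun r => (w r).toNNReal) s : ℝ≥0∞)) := rfl
    rw [this, integral_withDensity_eq_integral_smul₀ hwnnaem]
    refine integral_congr_ae (ae_restrict_of_forall_mem measurableSet_Ioo fun s hs => ?_)
    simp only [NNReal.smul_def, smul_eq_mul]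
    rw [Real.coe_toNNReal _ (hw s hs).le, mul_comm]
  have step3 : ∫ s, F s ^ (p - 1) ∂ρ = ∫ y, y ^ (p - 1) ∂(Measure.map F ρ) :=
    (integral_map hFmeas.aemeasurable hg.aestronglyMeasurable).symm
  have step4 : ∫ y, y ^ (p - 1) ∂(Measure.map F ρ) = A ^ p / p := by
    rw [hmap]
    have : ∫ y in Ioo 0 A, y ^ (p - 1) = ∫ y in (0:ℝ)..A, y ^ (p - 1) := by
      rw [intervalIntegral.integral_of_le hA0.le, integral_Ioc_eq_integral_Ioo]
    rw [this, integral_rpow (Or.inl (by linarith : (-1:ℝ) < p - 1))]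
    rw [sub_add_cancel, Real.zero_rpow (by linarith : p ≠ 0), sub_zero]
  rw [step1, ← step2, step3, step4]

/-- Basic comparison `σ_p ≤ δ̄₁ ≤ p σ_p` for the improved lower-bound quantity `δ̄₁`. -/
theorem stmt8 (p pstar D : ℝ) (hp : 1 < p) (hconj : 1/p + 1/pstar = 1) (hD : 0 < D)
    (u v : ℝ → ℝ)
    (hu : ∀ x ∈ Ioo (0:ℝ) D, 0 < u x) (hv : ∀ x ∈ Ioo (0:ℝ) D, 0 < v x)
    (huI : ∀ x ∈ Ioo (0:ℝ) D, IntegrableOn u (Ioo 0 x))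
    (hvI : ∀ x ∈ Ioo (0:ℝ) D, IntegrableOn (fun s => v s ^ (1 - pstar)) (Ioo x D))
    (hgI : ∀ x ∈ Ioo (0:ℝ) D,
      IntegrableOn (fun t => (∫ s in Ioo t D, v s ^ (1 - pstar)) ^ p * u t) (Ioo x D))
    (σ δ : ℝ)
    (hσ : IsLUB {r : ℝ | ∃ x ∈ Ioo (0:ℝ) D,
      r = (∫ t in Ioo 0 x, u t) * (∫ s in Ioo x D, v s ^ (1 - pstar)) ^ (p - 1)} σ)
    (hδ : IsLUB {r : ℝ | ∃ x ∈ Ioo (0:ℝ) D,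
      r = (∫ t in Ioo 0 x, u t) * (∫ s in Ioo x D, v s ^ (1 - pstar)) ^ (p - 1)
        + (∫ s in Ioo x D, v s ^ (1 - pstar))⁻¹ *
          ∫ t in Ioo x D, (∫ s in Ioo t D, v s ^ (1 - pstar)) ^ p * u t} δ) :
    σ ≤ δ ∧ δ ≤ p * σ := by
  have hp0 : (0:ℝ) < p := by linarith
  have main : ∀ x ∈ Ioo (0:ℝ) D,
      0 < (∫ s in Ioo x D, v s ^ (1 - pstar)) ∧
      0 ≤ (∫ t in Ioo x D, (∫ s in Ioo t D, v s ^ (1 - pstar)) ^ p * u t) ∧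
      (∫ t in Ioo x D, (∫ s in Ioo t D, v s ^ (1 - pstar)) ^ p * u t)
        ≤ p * σ * (∫ s in Ioo x D, v s ^ (1 - pstar))
          - (∫ t in Ioo 0 x, u t) * (∫ s in Ioo x D, v s ^ (1 - pstar)) ^ p := by
    intro x hx
    obtain ⟨hx0, hxD⟩ := hx
    set W : ℝ → ℝ := fun s => v s ^ (1 - pstar) with hWdef
    have hW : ∀ s ∈ Ioo (0:ℝ) D, 0 < W s := fun s hs => Real.rpow_pos_of_pos (hv s hs) _
    have hWIx : IntegrableOn W (Ioo x D) := hvI x ⟨hx0, hxD⟩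
    have hWI' : ∀ {S : Set ℝ}, S ⊆ Ioo x D → IntegrableOn W S := fun h => hWIx.mono_set h
    have hWpos : ∀ s ∈ Ioo x D, 0 < W s := fun s hs => hW s ⟨lt_trans hx0 hs.1, hs.2⟩
    have hNxpos : 0 < ∫ s in Ioo x D, W s := integral_pos_aux x D hxD W hWpos hWIx
    have hkey : ∀ t ∈ Ico x D,
        ∫ s in Ioo t D, (∫ r in Ioo s D, W r) ^ (p - 1) * W s
          = (∫ s in Ioo t D, W s) ^ p / p := by
      intro t ht
      exact keyA p D t hp W ht.2
        (fun s hs => hW s ⟨lt_trans hx0 (lt_of_le_of_lt ht.1 hs.1), hs.2⟩)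
        (hWI' (Ioo_subset_Ioo ht.1 le_rfl))
    have hQsub : ∀ s : ℝ, Ioo (max s x) D ⊆ Ioo x D := fun s =>
      Ioo_subset_Ioo (le_max_right s x) le_rfl
    set Q : ℝ → ℝ := fun s => ∫ r in Ioo (max s x) D, W r with hQdef
    have hQ0 : ∀ s, 0 ≤ Q s := fun s =>
      setIntegral_nonneg measurableSet_Ioo fun r hr => (hWpos r (hQsub s hr)).le
    have hWnn : 0 ≤ᵐ[volume.restrict (Ioo x D)] W :=
      ae_restrict_of_forall_mem measurableSet_Ioo fun s hs => (hWpos s hs).le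
    have hQle : ∀ s, Q s ≤ Q x := by
      intro s
      have h1 : Q s ≤ ∫ r in Ioo x D, W r :=
        setIntegral_mono_set hWIx hWnn ((hQsub s).eventuallyLE)
      have h2 : Q x = ∫ r in Ioo x D, W r := by simp only [hQdef, max_self]
      linarith
    have hQanti : Antitone Q := by
      intro s1 s2 h
      refine setIntegral_mono_set (hWI' (hQsub s1))
        (ae_restrict_of_ae_restrict_of_subset (hQsub s1) hWnn)
        (HasSubset.Subset.eventuallyLE ?_)
      exact Ioo_subset_Ioo (max_le_max h le_rfl) le_rfl
    have hQmeas : Measurable Q := hQanti.measurable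
    have hQval : ∀ s, x ≤ s → Q s = ∫ r in Ioo s D, W r := by
      intro s hs; simp only [hQdef, max_eq_left hs]
    have hQpos : ∀ s ∈ Ioo x D, 0 < Q s := by
      intro s hs
      rw [hQval s hs.1.le]
      exact integral_pos_aux s D hs.2 W
        (fun r hr => hWpos r ⟨lt_trans hs.1 hr.1, hr.2⟩)
        (hWI' (Ioo_subset_Ioo hs.1.le le_rfl))
    have hgIx : IntegrableOn (fun t => (∫ s in Ioo t D, W s) ^ p * u t) (Ioo x D) :=
      hgI x ⟨hx0, hxD⟩
    have hum : AEStronglyMeasurable u (volume.restrict (Ioo x D)) := by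
      have h1 : AEStronglyMeasurable (fun t => (∫ s in Ioo t D, W s) ^ p * u t)
          (volume.restrict (Ioo x D)) := hgIx.aestronglyMeasurable
      have h2 : AEStronglyMeasurable (fun t => ((Q t) ^ p)⁻¹) (volume.restrict (Ioo x D)) :=
        ((hQmeas.pow measurable_const).inv).aestronglyMeasurable
      refine (h2.mul h1).congr ?_
      refine ae_restrict_of_forall_mem measurableSet_Ioo fun t ht => ?_
      have hq := hQval t ht.1.le
      have hqp : (0:ℝ) < Q t ^ p := Real.rpow_pos_of_pos (hQpos t ht) p
      show (Q t ^ p)⁻¹ * ((∫ s in Ioo t D, W s) ^ p * u t) = u t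
      rw [← hq]
      field_simp
    set g : ℝ → ℝ := fun s => (Ioo x D).indicator (fun r => Q r ^ (p - 1) * W r) s with hgdef
    have hg0 : ∀ s, 0 ≤ g s := by
      intro s
      by_cases h : s ∈ Ioo x D
      · simp only [hgdef, indicator_of_mem h]
        exact mul_nonneg (Real.rpow_nonneg (hQ0 s) _) (hWpos s h).le
      · simp only [hgdef, indicator_of_notMem h]
        exact le_rfl
    have hWm : AEStronglyMeasurable W (volume.restrict (Ioo x D)) := hWIx.aestronglyMeasurable
    have hgm : AEStronglyMeasurable g (volume.restrict (Ioo x D)) := by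
      have hW'meas : StronglyMeasurable (hWm.mk W) := hWm.stronglyMeasurable_mk
      have hg'meas : AEStronglyMeasurable
          (fun s => (Ioo x D).indicator (fun r => Q r ^ (p - 1) * hWm.mk W r) s)
          (volume.restrict (Ioo x D)) :=
        (((hQmeas.pow measurable_const).mul hW'meas.measurable).indicator
          measurableSet_Ioo).aestronglyMeasurable
      refine hg'meas.congr ?_
      filter_upwards [hWm.ae_eq_mk] with s hs
      by_cases h : s ∈ Ioo x D
      · simp only [hgdef, indicator_of_mem h, hs]
      · simp only [hgdef, indicator_of_notMem h]
    have hgInt : Integrable g (volume.restrict (Ioo x D)) := by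
      have hf1m : AEStronglyMeasurable
          (fun s => (Ioo x D).indicator (fun r => Q r ^ (p - 1)) s)
          (volume.restrict (Ioo x D)) :=
        ((hQmeas.pow measurable_const).indicator measurableSet_Ioo).aestronglyMeasurable
      have hbd : ∀ s, ‖(Ioo x D).indicator (fun r => Q r ^ (p - 1)) s‖ ≤ Q x ^ (p - 1) := by
        intro s
        by_cases h : s ∈ Ioo x D
        · rw [indicator_of_mem h, Real.norm_eq_abs, abs_of_nonneg (Real.rpow_nonneg (hQ0 s) _)]
          exact Real.rpow_le_rpow (hQ0 s) (hQle s) (by linarith)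
        · rw [indicator_of_notMem h, norm_zero]
          exact Real.rpow_nonneg (hQ0 x) _
      have h := hWIx.bdd_mul hf1m (Filter.Eventually.of_forall hbd)
      refine h.congr (Filter.Eventually.of_forall fun s => ?_)
      by_cases hs : s ∈ Ioo x D
      · simp only [hgdef, indicator_of_mem hs]
      · simp only [hgdef, indicator_of_notMem hs, zero_mul]
    have hσbound : ∀ s ∈ Ioo x D, (∫ t in Ioo 0 s, u t) * Q s ^ (p - 1) ≤ σ := by
      intro s hs
      refine hσ.1 ⟨s, ⟨lt_trans hx0 hs.1, hs.2⟩, ?_⟩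
      rw [hQval s hs.1.le]
    have hMadd : ∀ s ∈ Ioo x D,
        (∫ t in Ioo 0 s, u t) = (∫ t in Ioo 0 x, u t) + ∫ t in Ioo x s, u t := by
      intro s hs
      have hdisj : Disjoint (Ioo (0:ℝ) x) (Ico x s) := by
        apply Set.disjoint_left.2
        rintro r ⟨_, hr2⟩ ⟨hr3, _⟩; exact absurd hr3 (not_le.2 hr2)
      have hun : Ioo (0:ℝ) x ∪ Ico x s = Ioo 0 s := Ioo_union_Ico_eq_Ioo hx0 hs.1.le
      have hico : IntegrableOn u (Ico x s) :=
        (huI s ⟨lt_trans hx0 hs.1, hs.2⟩).mono_set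
          (fun r hr => ⟨lt_of_lt_of_le hx0 hr.1, hr.2⟩)
      rw [← hun, setIntegral_union hdisj measurableSet_Ico (huI x ⟨hx0, hxD⟩) hico,
        integral_Ico_eq_integral_Ioo]
    set S : Set (ℝ × ℝ) := {q : ℝ × ℝ | x < q.1 ∧ q.1 < q.2} with hSdef
    have hSmeas : MeasurableSet S :=
      (measurableSet_lt measurable_const measurable_fst).inter
        (measurableSet_lt measurable_fst measurable_snd)
    set H : ℝ × ℝ → ℝ := fun q => (u q.1 * g q.2) * S.indicator (fun _ => (1:ℝ)) q with hHdef
    have hHm : AEStronglyMeasurable H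
        ((volume.restrict (Ioo x D)).prod (volume.restrict (Ioo x D))) := by
      have h1 : AEStronglyMeasurable (fun q : ℝ × ℝ => u q.1)
          ((volume.restrict (Ioo x D)).prod (volume.restrict (Ioo x D))) :=
        hum.comp_quasiMeasurePreserving Measure.quasiMeasurePreserving_fst
      have h2 : AEStronglyMeasurable (fun q : ℝ × ℝ => g q.2)
          ((volume.restrict (Ioo x D)).prod (volume.restrict (Ioo x D))) :=
        hgm.comp_quasiMeasurePreserving Measure.quasiMeasurePreserving_snd
      have h3 : StronglyMeasurable (S.indicator (fun _ => (1:ℝ))) :=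
        (measurable_const.indicator hSmeas).stronglyMeasurable
      exact (h1.mul h2).mul h3.aestronglyMeasurable
    have hsect1 : ∀ t ∈ Ioo x D,
        (fun s => H (t, s)) = (Ioi t).indicator (fun s => u t * g s) := by
      intro t ht; funext s
      by_cases h : t < s
      · simp only [hHdef]
        rw [indicator_of_mem (show (t, s) ∈ S from ⟨ht.1, h⟩),
          indicator_of_mem (mem_Ioi.2 h)]
        ring
      · simp only [hHdef]
        rw [indicator_of_notMem (show (t, s) ∉ S from fun hc => h hc.2),
          indicator_of_notMem (by simpa using h)]
        ring
    have hsect2 : ∀ s : ℝ, (fun t => H (t, s)) = (Ioo x s).indicator (fun t => u t * g s) := by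
      intro s; funext t
      by_cases h : t ∈ Ioo x s
      · simp only [hHdef]
        rw [indicator_of_mem (show (t, s) ∈ S from ⟨h.1, h.2⟩), indicator_of_mem h]
        ring
      · simp only [hHdef]
        rw [indicator_of_notMem (show (t, s) ∉ S from fun hc => h ⟨hc.1, hc.2⟩),
          indicator_of_notMem h]
        ring
    have hIoiInter : ∀ t ∈ Ioo x D, Ioi t ∩ Ioo x D = Ioo t D := by
      intro t ht; ext r
      exact ⟨fun hr => ⟨hr.1, hr.2.2⟩, fun hr => ⟨hr.1, lt_trans ht.1 hr.1, hr.2⟩⟩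
    have hginner : ∀ t ∈ Ioo x D, ∫ s in Ioo t D, g s = (∫ s in Ioo t D, W s) ^ p / p := by
      intro t ht
      have h1 : ∫ s in Ioo t D, g s
          = ∫ s in Ioo t D, (∫ r in Ioo s D, W r) ^ (p - 1) * W s := by
        refine setIntegral_congr_fun measurableSet_Ioo fun s hs => ?_
        have hsmem : s ∈ Ioo x D := ⟨lt_trans ht.1 hs.1, hs.2⟩
        simp only [hgdef]
        rw [indicator_of_mem hsmem, hQval s hsmem.1.le]
      rw [h1, hkey t ⟨ht.1.le, ht.2⟩]
    have hinner : ∀ t ∈ Ioo x D,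
        ∫ s, H (t, s) ∂(volume.restrict (Ioo x D))
          = u t * ((∫ s in Ioo t D, W s) ^ p / p) := by
      intro t ht
      rw [hsect1 t ht, integral_indicator measurableSet_Ioi,
        Measure.restrict_restrict measurableSet_Ioi, hIoiInter t ht,
        integral_const_mul, hginner t ht]
    have hHnonneg : ∀ t ∈ Ioo x D, ∀ s, 0 ≤ H (t, s) := by
      intro t ht s
      simp only [hHdef]
      refine mul_nonneg (mul_nonneg (hu t ⟨lt_trans hx0 ht.1, ht.2⟩).le (hg0 s)) ?_
      exact indicator_nonneg (fun _ _ => zero_le_one) _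
    have hHInt : Integrable H
        ((volume.restrict (Ioo x D)).prod (volume.restrict (Ioo x D))) := by
      rw [integrable_prod_iff hHm]
      constructor
      · refine ae_restrict_of_forall_mem measurableSet_Ioo fun t ht => ?_
        rw [hsect1 t ht]
        exact (hgInt.const_mul (u t)).indicator measurableSet_Ioi
      · have heq : ∀ t ∈ Ioo x D,
            (∫ s, ‖H (t, s)‖ ∂(volume.restrict (Ioo x D)))
              = (∫ s in Ioo t D, W s) ^ p * u t / p := by
          intro t ht
          have h0 : (fun s => ‖H (t, s)‖) = fun s => H (t, s) := by
            funext s; rw [Real.norm_eq_abs, abs_of_nonneg (hHnonneg t ht s)]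
          rw [h0, hinner t ht]; ring
        refine (hgIx.div_const p).congr ?_
        refine ae_restrict_of_forall_mem measurableSet_Ioo fun t ht => ?_
        exact (heq t ht).symm
    have hswap := integral_integral_swap (f := fun a b => H (a, b)) hHInt
    have hLHS : ∫ t, (∫ s, H (t, s) ∂(volume.restrict (Ioo x D)))
          ∂(volume.restrict (Ioo x D))
        = (∫ t in Ioo x D, (∫ s in Ioo t D, W s) ^ p * u t) / p := by
      rw [← integral_div]
      refine setIntegral_congr_fun measurableSet_Ioo fun t ht => ?_
      rw [hinner t ht]; ring
    have houter : ∀ s ∈ Ioo x D,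
        (∫ t, H (t, s) ∂(volume.restrict (Ioo x D))) = g s * ∫ t in Ioo x s, u t := by
      intro s hs
      rw [hsect2 s, integral_indicator measurableSet_Ioo,
        Measure.restrict_restrict measurableSet_Ioo,
        inter_eq_self_of_subset_left (Ioo_subset_Ioo le_rfl hs.2.le),
        integral_mul_const, mul_comm]
    have hRHSle : ∫ s, (∫ t, H (t, s) ∂(volume.restrict (Ioo x D)))
          ∂(volume.restrict (Ioo x D))
        ≤ σ * (∫ s in Ioo x D, W s)
          - (∫ t in Ioo 0 x, u t) * ((∫ s in Ioo x D, W s) ^ p / p) := by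
      have hInt1 : Integrable (fun s => ∫ t, H (t, s) ∂(volume.restrict (Ioo x D)))
          (volume.restrict (Ioo x D)) := hHInt.integral_prod_right
      have hInt2 : Integrable (fun s => σ * W s - (∫ t in Ioo 0 x, u t) * g s)
          (volume.restrict (Ioo x D)) := (hWIx.const_mul σ).sub (hgInt.const_mul _)
      have hle : ∀ s ∈ Ioo x D,
          (∫ t, H (t, s) ∂(volume.restrict (Ioo x D)))
            ≤ σ * W s - (∫ t in Ioo 0 x, u t) * g s := by
        intro s hs
        rw [houter s hs]
        have hMs := hMadd s hs
        have hσs := hσbound s hs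
        have hgs : g s = Q s ^ (p - 1) * W s := indicator_of_mem hs _
        have hWs : (0:ℝ) ≤ W s := (hWpos s hs).le
        have hMxs : (∫ t in Ioo x s, u t)
            = (∫ t in Ioo 0 s, u t) - (∫ t in Ioo 0 x, u t) := by linarith
        rw [hgs, hMxs]
        have hkey2 : (∫ t in Ioo 0 s, u t) * Q s ^ (p - 1) * W s ≤ σ * W s :=
          mul_le_mul_of_nonneg_right hσs hWs
        nlinarith [hkey2]
      calc ∫ s, (∫ t, H (t, s) ∂(volume.restrict (Ioo x D))) ∂(volume.restrict (Ioo x D))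
          ≤ ∫ s in Ioo x D, (σ * W s - (∫ t in Ioo 0 x, u t) * g s) :=
            integral_mono_ae hInt1 hInt2
              (ae_restrict_of_forall_mem measurableSet_Ioo hle)
        _ = σ * (∫ s in Ioo x D, W s)
            - (∫ t in Ioo 0 x, u t) * ((∫ s in Ioo x D, W s) ^ p / p) := by
            rw [integral_sub (hWIx.const_mul σ) (hgInt.const_mul _),
              integral_const_mul, integral_const_mul]
            have h1 : ∫ s in Ioo x D, g s
                = ∫ s in Ioo x D, (∫ r in Ioo s D, W r) ^ (p - 1) * W s := by
              refine setIntegral_congr_fun measurableSet_Ioo fun s hs => ?_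
              simp only [hgdef]
              rw [indicator_of_mem hs, hQval s hs.1.le]
            rw [h1, hkey x ⟨le_rfl, hxD⟩]
    refine ⟨hNxpos, ?_, ?_⟩
    · refine setIntegral_nonneg measurableSet_Ioo fun t ht => ?_
      refine mul_nonneg (Real.rpow_nonneg ?_ p) (hu t ⟨lt_trans hx0 ht.1, ht.2⟩).le
      exact setIntegral_nonneg measurableSet_Ioo fun s hs =>
        (hW s ⟨lt_trans hx0 (lt_trans ht.1 hs.1), hs.2⟩).le
    · have h2 : (∫ t in Ioo x D, (∫ s in Ioo t D, W s) ^ p * u t) / p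
          ≤ σ * (∫ s in Ioo x D, W s)
            - (∫ t in Ioo 0 x, u t) * ((∫ s in Ioo x D, W s) ^ p / p) := by
        rw [← hLHS, hswap]; exact hRHSle
      have h3 := (div_le_iff₀ hp0).1 h2
      calc ∫ t in Ioo x D, (∫ s in Ioo t D, W s) ^ p * u t
          ≤ (σ * (∫ s in Ioo x D, W s)
              - (∫ t in Ioo 0 x, u t) * ((∫ s in Ioo x D, W s) ^ p / p)) * p := h3
        _ = p * σ * (∫ s in Ioo x D, W s)
            - (∫ t in Ioo 0 x, u t) * (∫ s in Ioo x D, W s) ^ p := by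
            field_simp
  constructor
  · refine hσ.2 ?_
    rintro r ⟨x, hx, rfl⟩
    obtain ⟨hN, hT0, -⟩ := main x hx
    calc (∫ t in Ioo 0 x, u t) * (∫ s in Ioo x D, v s ^ (1 - pstar)) ^ (p - 1)
        ≤ (∫ t in Ioo 0 x, u t) * (∫ s in Ioo x D, v s ^ (1 - pstar)) ^ (p - 1)
          + (∫ s in Ioo x D, v s ^ (1 - pstar))⁻¹ *
            ∫ t in Ioo x D, (∫ s in Ioo t D, v s ^ (1 - pstar)) ^ p * u t :=
          le_add_of_nonneg_right (mul_nonneg (inv_nonneg.2 hN.le) hT0)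
      _ ≤ δ := hδ.1 ⟨x, hx, rfl⟩
  · refine hδ.2 ?_
    rintro r ⟨x, hx, rfl⟩
    obtain ⟨hN, hT0, hTle⟩ := main x hx
    set Nx : ℝ := ∫ s in Ioo x D, v s ^ (1 - pstar) with hNx
    set Mx : ℝ := ∫ t in Ioo 0 x, u t with hMx
    set T : ℝ := ∫ t in Ioo x D, (∫ s in Ioo t D, v s ^ (1 - pstar)) ^ p * u t with hT
    have h1 : Nx⁻¹ * T ≤ Nx⁻¹ * (p * σ * Nx - Mx * Nx ^ p) :=
      mul_le_mul_of_nonneg_left hTle (inv_nonneg.2 hN.le)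
    have hpow : Nx ^ p = Nx ^ (p - 1) * Nx := by
      conv_lhs => rw [show p = p - 1 + 1 by ring]
      rw [Real.rpow_add_one hN.ne']
    have h2 : Nx⁻¹ * (p * σ * Nx - Mx * Nx ^ p) = p * σ - Mx * Nx ^ (p - 1) := by
      rw [hpow]
      field_simp
    linarith [h1, h2.le]
end

section
/- Let p > 1, let f ∈ C[0,D] with f > 0 on (0,D), f' < 0 on (0,D), v^(p*-1) f' continuous on (0,D), and f(D) ≥ 0. Then for every x ∈ (0,D), II(f)(x) ≤ sup_{y∈(0,D)} I(f)(y), where I(f)(x) = −(v f'|f'|^(p-2))(x)^{-1} ∫_0^x f^(p-1) dμ and II(f)(x) = f(x)^(1-p) [ ∫_x^D v̂(s) (∫_0^s f^(p-1) dμ)^(p*-1) ds ]^(p-1). -/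
open MeasureTheory Set

/-- For decreasing positive `f` with `f(D) ≥ 0`, the double-integral operator is
dominated by the supremum of the single-integral operator: `II(f)(x) ≤ sup_y I(f)(y)`. -/
theorem stmt10 (p pstar D : ℝ) (hp : 1 < p) (hconj : 1/p + 1/pstar = 1) (hD : 0 < D)
    (u v : ℝ → ℝ)
    (hu : ∀ x ∈ Ioo (0:ℝ) D, 0 < u x) (hv : ∀ x ∈ Ioo (0:ℝ) D, 0 < v x)
    (huI : ∀ x ∈ Ioo (0:ℝ) D, IntegrableOn u (Ioo 0 x))
    (f f' : ℝ → ℝ)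
    (hf : ContinuousOn f (Icc 0 D))
    (hfpos : ∀ x ∈ Ioo (0:ℝ) D, 0 < f x)
    (hfd : ∀ x ∈ Ioo (0:ℝ) D, HasDerivAt f (f' x) x)
    (hf'neg : ∀ x ∈ Ioo (0:ℝ) D, f' x < 0)
    (hfc : ContinuousOn (fun x => v x ^ (pstar - 1) * f' x) (Ioo 0 D))
    (hfD : 0 ≤ f D)
    (K : ℝ)
    (hK : ∀ y ∈ Ioo (0:ℝ) D,
      -(1 / (v y * f' y * |f' y| ^ (p - 2))) * (∫ t in Ioo 0 y, f t ^ (p - 1) * u t) ≤ K) :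
    ∀ x ∈ Ioo (0:ℝ) D,
      f x ^ (1 - p) *
        (∫ s in Ioo x D, v s ^ (1 - pstar) *
          (∫ t in Ioo 0 s, f t ^ (p - 1) * u t) ^ (pstar - 1)) ^ (p - 1) ≤ K := by
  -- exponent arithmetic
  have hp0 : (0:ℝ) < p := by linarith
  have hpm : (0:ℝ) < p - 1 := by linarith
  have hpsne : pstar ≠ 0 := by
    intro h
    rw [h, div_zero, add_zero] at hconj
    have : p = 1 := by
      field_simp at hconj
      linarith
    linarith
  have key : (p - 1) * (pstar - 1) = 1 := by
    have hpne : p ≠ 0 := ne_of_gt hp0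
    field_simp at hconj
    nlinarith [hconj]
  have hpst : (0:ℝ) < pstar - 1 := by nlinarith
  -- notation
  set F : ℝ → ℝ := fun s => ∫ t in Ioo (0:ℝ) s, f t ^ (p - 1) * u t with hF
  have hF0 : ∀ s, s ≤ D → 0 ≤ F s := by
    intro s hs
    apply setIntegral_nonneg measurableSet_Ioo
    intro t ht
    have htD : t ∈ Ioo (0:ℝ) D := ⟨ht.1, lt_of_lt_of_le ht.2 hs⟩
    exact mul_nonneg (Real.rpow_nonneg (hfpos t htD).le _) (hu t htD).le
  -- K is nonnegative
  have hK0 : 0 ≤ K := by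
    rcases exists_between hD with ⟨y, hy0, hyD⟩
    have hyI : y ∈ Ioo (0:ℝ) D := ⟨hy0, hyD⟩
    refine le_trans ?_ (hK y hyI)
    have hden : v y * f' y * |f' y| ^ (p - 2) < 0 := by
      have h1 : 0 < |f' y| ^ (p - 2) :=
        Real.rpow_pos_of_pos (abs_pos.mpr (ne_of_lt (hf'neg y hyI))) _
      have h2 : v y * f' y < 0 := mul_neg_of_pos_of_neg (hv y hyI) (hf'neg y hyI)
      exact mul_neg_of_neg_of_pos h2 h1
    have : 0 ≤ -(1 / (v y * f' y * |f' y| ^ (p - 2))) :=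
      neg_nonneg.mpr (le_of_lt (div_neg_of_pos_of_neg one_pos hden))
    exact mul_nonneg this (hF0 y hyD.le)
  intro x hx
  set φ : ℝ → ℝ := fun s => v s ^ (1 - pstar) * F s ^ (pstar - 1) with hφ
  -- pointwise bound
  have hpt : ∀ s ∈ Ioo x D, φ s ≤ K ^ (pstar - 1) * (-(f' s)) := by
    intro s hs
    have hsI : s ∈ Ioo (0:ℝ) D := ⟨lt_trans hx.1 hs.1, hs.2⟩
    have hc : 0 < -(f' s) := neg_pos.mpr (hf'neg s hsI)
    have hvs : 0 < v s := hv s hsI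
    set c : ℝ := -(f' s) with hcdef
    have habs : |f' s| = c := abs_of_neg (hf'neg s hsI)
    have hA : 0 < v s * c ^ (p - 1) := mul_pos hvs (Real.rpow_pos_of_pos hc _)
    -- rewrite hK s into F s ≤ K * (v s * c ^ (p-1))
    have hden : v s * f' s * |f' s| ^ (p - 2) = -(v s * c ^ (p - 1)) := by
      rw [habs]
      have : c ^ (p - 1) = c ^ (p - 2) * c := by
        rw [← Real.rpow_add_one (ne_of_gt hc)]
        ring_nf
      rw [this]
      have hfs : f' s = -c := by simp [hcdef]
      rw [hfs]; ring
    have hKs := hK s hsI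
    rw [hden] at hKs
    have hKs' : (1 / (v s * c ^ (p - 1))) * F s ≤ K := by
      rw [one_div_neg_eq_neg_one_div] at hKs
      simpa using hKs
    have hFs : F s ≤ K * (v s * c ^ (p - 1)) := by
      rw [one_div, inv_mul_eq_div, div_le_iff₀ hA] at hKs'
      exact hKs'
    -- raise to the power pstar - 1
    have h1 : F s ^ (pstar - 1) ≤ (K * (v s * c ^ (p - 1))) ^ (pstar - 1) :=
      Real.rpow_le_rpow (hF0 s hs.2.le) hFs hpst.le
    have h2 : (K * (v s * c ^ (p - 1))) ^ (pstar - 1)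
        = K ^ (pstar - 1) * (v s ^ (pstar - 1) * c) := by
      rw [Real.mul_rpow hK0 hA.le, Real.mul_rpow hvs.le (Real.rpow_nonneg hc.le _),
        ← Real.rpow_mul hc.le, key, Real.rpow_one]
    have h3 : φ s ≤ v s ^ (1 - pstar) * (K ^ (pstar - 1) * (v s ^ (pstar - 1) * c)) := by
      rw [hφ]
      exact mul_le_mul_of_nonneg_left (h1.trans_eq h2) (Real.rpow_nonneg hvs.le _)
    refine h3.trans_eq ?_
    have hv0 : v s ^ (1 - pstar) * v s ^ (pstar - 1) = 1 := by
      rw [← Real.rpow_add hvs]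
      norm_num
    calc v s ^ (1 - pstar) * (K ^ (pstar - 1) * (v s ^ (pstar - 1) * c))
        = (v s ^ (1 - pstar) * v s ^ (pstar - 1)) * (K ^ (pstar - 1) * c) := by ring
      _ = K ^ (pstar - 1) * c := by rw [hv0, one_mul]
  have hφ0 : 0 ≤ ∫ s in Ioo x D, φ s := by
    apply setIntegral_nonneg measurableSet_Ioo
    intro s hs
    have hsI : s ∈ Ioo (0:ℝ) D := ⟨lt_trans hx.1 hs.1, hs.2⟩
    exact mul_nonneg (Real.rpow_nonneg (hv s hsI).le _)
      (Real.rpow_nonneg (hF0 s hs.2.le) _)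
  have hfx : 0 < f x := hfpos x hx
  -- Main integral estimate:
  have hIle : (∫ s in Ioo x D, φ s) ≤ K ^ (pstar - 1) * f x := by
    by_cases hInt : IntegrableOn φ (Ioo x D)
    · have hφIcc : IntegrableOn φ (Icc x D) := by
        rwa [integrableOn_Icc_iff_integrableOn_Ioo]
      have hcont : ContinuousOn (fun t => K ^ (pstar - 1) * (-(f t))) (Icc x D) :=
        continuousOn_const.mul ((hf.mono (Icc_subset_Icc hx.1.le le_rfl)).neg)
      have hderiv : ∀ s ∈ Ioo x D, HasDerivWithinAt (fun t => K ^ (pstar - 1) * (-(f t)))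
          (K ^ (pstar - 1) * (-(f' s))) (Ioi s) s := by
        intro s hs
        have hsI : s ∈ Ioo (0:ℝ) D := ⟨lt_trans hx.1 hs.1, hs.2⟩
        exact (((hfd s hsI).neg).const_mul _).hasDerivWithinAt
      have hmain := intervalIntegral.integral_le_sub_of_hasDeriv_right_of_le hx.2.le hcont
        hderiv hφIcc hpt
      rw [intervalIntegral.integral_of_le hx.2.le, integral_Ioc_eq_integral_Ioo] at hmain
      have : K ^ (pstar - 1) * (-(f D)) - K ^ (pstar - 1) * (-(f x))
          = K ^ (pstar - 1) * (f x - f D) := by ring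
      rw [this] at hmain
      refine hmain.trans ?_
      exact mul_le_mul_of_nonneg_left (by linarith) (Real.rpow_nonneg hK0 _)
    · rw [integral_undef hInt]
      positivity
  -- conclude
  have h4 : (∫ s in Ioo x D, φ s) ^ (p - 1) ≤ (K ^ (pstar - 1) * f x) ^ (p - 1) :=
    Real.rpow_le_rpow hφ0 hIle hpm.le
  have h5 : (K ^ (pstar - 1) * f x) ^ (p - 1) = K * f x ^ (p - 1) := by
    rw [Real.mul_rpow (Real.rpow_nonneg hK0 _) hfx.le, ← Real.rpow_mul hK0]
    rw [show (pstar - 1) * (p - 1) = 1 by linarith [key]]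
    rw [Real.rpow_one]
  rw [h5] at h4
  calc f x ^ (1 - p) * (∫ s in Ioo x D, φ s) ^ (p - 1)
      ≤ f x ^ (1 - p) * (K * f x ^ (p - 1)) :=
        mul_le_mul_of_nonneg_left h4 (Real.rpow_nonneg hfx.le _)
    _ = K * (f x ^ (1 - p) * f x ^ (p - 1)) := by ring
    _ = K := by
        rw [← Real.rpow_add hfx]
        norm_num
end

section
/- For f ∈ F_II = {f ∈ C[0,D] : f > 0 on (0,D)} with ξ := inf_{x∈(0,D)} II(f)(x)^{-1} > 0, define g = f · II(f)^(p*-1), i.e., g(x) = ∫_x^D v̂(s)(∫_0^s f^(p-1) dμ)^(p*-1) ds. Then g is positive and strictly decreasing on (0,D), v(x)(−g'(x))^(p-1) = ∫_0^x f^(p-1) dμ, and I(g)(x)^{-1} ≥ ξ for all x ∈ (0,D). Hence sup_{f∈F_I} inf_x I(f)(x)^{-1} ≥ sup_{f∈F_II} inf_x II(f)(x)^{-1}. -/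
open MeasureTheory Set

private lemma aux_inv_le {a b : ℝ} (ha : 0 < a) (h : a ≤ b⁻¹) : b ≤ a⁻¹ := by
  rw [← inv_inv b]; exact inv_anti₀ ha h

/-- From `f ∈ F_II` with `inf II(f)⁻¹ = ξ > 0`, the function `g = f·II(f)^(p*-1)` is
positive, strictly decreasing, satisfies `v(−g')^(p-1) = ∫_0^x f^(p-1) dμ`, and
`I(g)(x)⁻¹ ≥ ξ` for all `x`. -/
theorem stmt12 (p pstar D ξ : ℝ) (hp : 1 < p) (hconj : 1/p + 1/pstar = 1)
    (hD : 0 < D) (hξ : 0 < ξ)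
    (u v f : ℝ → ℝ)
    (hu : ∀ x ∈ Ioo (0:ℝ) D, 0 < u x) (hv : ∀ x ∈ Ioo (0:ℝ) D, 0 < v x)
    (huI : ∀ x ∈ Ioo (0:ℝ) D, IntegrableOn u (Ioo 0 x))
    (hf : ContinuousOn f (Icc 0 D)) (hfpos : ∀ x ∈ Ioo (0:ℝ) D, 0 < f x)
    (hξI : ∀ x ∈ Ioo (0:ℝ) D,
      ξ ≤ (f x ^ (1 - p) *
        (∫ s in Ioo x D, v s ^ (1 - pstar) *
          (∫ t in Ioo 0 s, f t ^ (p - 1) * u t) ^ (pstar - 1)) ^ (p - 1))⁻¹)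
    (hI : IntegrableOn (fun s => v s ^ (1 - pstar) *
      (∫ t in Ioo 0 s, f t ^ (p - 1) * u t) ^ (pstar - 1)) (Ioo 0 D))
    (hC : ContinuousOn (fun s => v s ^ (1 - pstar) *
      (∫ t in Ioo 0 s, f t ^ (p - 1) * u t) ^ (pstar - 1)) (Ioo 0 D))
    (g : ℝ → ℝ)
    (hg : ∀ x, g x = ∫ s in Ioo x D, v s ^ (1 - pstar) *
      (∫ t in Ioo 0 s, f t ^ (p - 1) * u t) ^ (pstar - 1)) :
    (∀ x ∈ Ioo (0:ℝ) D, 0 < g x) ∧ StrictAntiOn g (Ioo 0 D) ∧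
    ∃ g' : ℝ → ℝ, (∀ x ∈ Ioo (0:ℝ) D, HasDerivAt g (g' x) x) ∧
      (∀ x ∈ Ioo (0:ℝ) D,
        v x * (-(g' x)) ^ (p - 1) = ∫ t in Ioo 0 x, f t ^ (p - 1) * u t) ∧
      (∀ x ∈ Ioo (0:ℝ) D,
        ξ ≤ ((∫ t in Ioo 0 x, g t ^ (p - 1) * u t) / (v x * (-(g' x)) ^ (p - 1)))⁻¹) := by
  have hp0 : (0:ℝ) < p := by linarith
  have hp1 : (0:ℝ) < p - 1 := by linarith
  have hps0 : (0:ℝ) < pstar := by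
    by_contra h
    push_neg at h
    have h1 : 1/pstar ≤ 0 := div_nonpos_of_nonneg_of_nonpos zero_le_one h
    have h3 : 1/p < 1 := by rw [div_lt_one hp0]; linarith
    linarith
  have hps : 1 < pstar := by
    have h3 : 1/p < 1 := by rw [div_lt_one hp0]; linarith
    have h2 : 0 < 1/p := by positivity
    have : 1/pstar < 1 := by linarith
    rwa [div_lt_one hps0] at this
  have hpp : (p - 1) * (pstar - 1) = 1 := by
    have hpne : p ≠ 0 := ne_of_gt hp0
    have hpsne : pstar ≠ 0 := ne_of_gt hps0
    field_simp at hconj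
    nlinarith [hconj]
  set H : ℝ → ℝ := fun s => v s ^ (1 - pstar) *
      (∫ t in Ioo 0 s, f t ^ (p - 1) * u t) ^ (pstar - 1) with hHdef
  -- integrability of f^(p-1) u
  have hFint : ∀ x ∈ Ioo (0:ℝ) D,
      IntegrableOn (fun t => f t ^ (p - 1) * u t) (Ioo 0 x) := by
    intro x hx
    obtain ⟨M, hM⟩ := isCompact_Icc.exists_bound_of_continuousOn hf
    have hmeas : AEStronglyMeasurable (fun t => f t ^ (p - 1) * u t)
        (volume.restrict (Ioo 0 x)) := by
      have h1 : ContinuousOn (fun t => f t ^ (p - 1)) (Ioo 0 x) :=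
        (hf.mono (fun t ht => ⟨ht.1.le, ht.2.le.trans hx.2.le⟩)).rpow_const
          (fun t _ => Or.inr hp1.le)
      exact (h1.aestronglyMeasurable measurableSet_Ioo).mul (huI x hx).aestronglyMeasurable
    refine Integrable.mono' (((huI x hx).norm.const_mul (M ^ (p-1)))) hmeas ?_
    filter_upwards [ae_restrict_mem measurableSet_Ioo] with t ht
    have htD : t ∈ Ioo (0:ℝ) D := ⟨ht.1, ht.2.trans hx.2⟩
    have hft := hfpos t htD
    have hfM : f t ≤ M := (le_abs_self _).trans (hM t ⟨htD.1.le, htD.2.le⟩)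
    have : f t ^ (p - 1) ≤ M ^ (p - 1) := Real.rpow_le_rpow hft.le hfM hp1.le
    have hfp : 0 < f t ^ (p - 1) := Real.rpow_pos_of_pos hft _
    rw [norm_mul, Real.norm_eq_abs, abs_of_pos hfp]
    calc f t ^ (p-1) * ‖u t‖ ≤ M ^ (p-1) * ‖u t‖ := by
          exact mul_le_mul_of_nonneg_right this (norm_nonneg _)
      _ = M ^ (p-1) * ‖u t‖ := rfl
  have hFii : ∀ x ∈ Ioo (0:ℝ) D,
      IntervalIntegrable (fun t => f t ^ (p - 1) * u t) volume 0 x := by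
    intro x hx
    rw [intervalIntegrable_iff_integrableOn_Ioo_of_le hx.1.le]
    exact hFint x hx
  have hApos : ∀ x ∈ Ioo (0:ℝ) D, 0 < ∫ t in Ioo 0 x, f t ^ (p - 1) * u t := by
    intro x hx
    rw [← integral_Ioc_eq_integral_Ioo, ← intervalIntegral.integral_of_le hx.1.le]
    refine intervalIntegral.intervalIntegral_pos_of_pos_on (hFii x hx) ?_ hx.1
    intro t ht
    have htD : t ∈ Ioo (0:ℝ) D := ⟨ht.1, ht.2.trans hx.2⟩
    exact mul_pos (Real.rpow_pos_of_pos (hfpos t htD) _) (hu t htD)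
  have hHpos : ∀ s ∈ Ioo (0:ℝ) D, 0 < H s := fun s hs =>
    mul_pos (Real.rpow_pos_of_pos (hv s hs) _) (Real.rpow_pos_of_pos (hApos s hs) _)
  have hHii : ∀ a b : ℝ, 0 ≤ a → b ≤ D → a ≤ b → IntervalIntegrable H volume a b := by
    intro a b ha hb hab
    rw [intervalIntegrable_iff_integrableOn_Ioo_of_le hab]
    exact hI.mono_set (Ioo_subset_Ioo ha hb)
  have hgi : ∀ x : ℝ, x ≤ D → g x = ∫ s in x..D, H s := by
    intro x hxD
    rw [hg, intervalIntegral.integral_of_le hxD, integral_Ioc_eq_integral_Ioo]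
  -- positivity of g
  have hgpos : ∀ x ∈ Ioo (0:ℝ) D, 0 < g x := by
    intro x hx
    rw [hgi x hx.2.le]
    refine intervalIntegral.intervalIntegral_pos_of_pos_on (hHii x D hx.1.le le_rfl hx.2.le)
      ?_ hx.2
    intro s hs
    exact hHpos s ⟨hx.1.trans hs.1, hs.2⟩
  -- strict antitonicity
  have hanti : StrictAntiOn g (Ioo 0 D) := by
    intro x hx y hy hxy
    have hsplit := intervalIntegral.integral_add_adjacent_intervals
      (hHii x y hx.1.le hy.2.le hxy.le) (hHii y D hy.1.le le_rfl hy.2.le)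
    have hpos : 0 < ∫ s in x..y, H s := by
      refine intervalIntegral.intervalIntegral_pos_of_pos_on
        (hHii x y hx.1.le hy.2.le hxy.le) ?_ hxy
      intro s hs
      exact hHpos s ⟨hx.1.trans hs.1, hs.2.trans hy.2⟩
    rw [hgi x hx.2.le, hgi y hy.2.le]
    linarith
  refine ⟨hgpos, hanti, fun x => -(H x), ?_, ?_, ?_⟩
  · -- derivative
    intro x hx
    have htot := intervalIntegral.integral_add_adjacent_intervals
      (hHii 0 x le_rfl hx.2.le hx.1.le) (hHii x D hx.1.le le_rfl hx.2.le)
    have hsplit : ∀ y ∈ Ioo (0:ℝ) D,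
        g y = (∫ s in (0:ℝ)..D, H s) - ∫ s in (0:ℝ)..y, H s := by
      intro y hy
      have := intervalIntegral.integral_add_adjacent_intervals
        (hHii 0 y le_rfl hy.2.le hy.1.le) (hHii y D hy.1.le le_rfl hy.2.le)
      rw [hgi y hy.2.le]
      linarith
    have hd : HasDerivAt (fun y => ∫ s in (0:ℝ)..y, H s) (H x) x :=
      intervalIntegral.integral_hasDerivAt_right (hHii 0 x le_rfl hx.2.le hx.1.le)
        (hC.stronglyMeasurableAtFilter isOpen_Ioo x hx)
        (hC.continuousAt (isOpen_Ioo.mem_nhds hx))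
    have hd2 : HasDerivAt (fun y => (∫ s in (0:ℝ)..D, H s) - ∫ s in (0:ℝ)..y, H s)
        (-(H x)) x := hd.const_sub _
    refine hd2.congr_of_eventuallyEq ?_
    filter_upwards [isOpen_Ioo.mem_nhds hx] with y hy
    exact hsplit y hy
  · -- the identity
    intro x hx
    have hvx := hv x hx
    have hA := hApos x hx
    rw [neg_neg]
    show v x * (v x ^ (1 - pstar) * (∫ t in Ioo 0 x, f t ^ (p-1) * u t) ^ (pstar - 1)) ^ (p-1)
      = ∫ t in Ioo 0 x, f t ^ (p - 1) * u t
    rw [Real.mul_rpow (Real.rpow_pos_of_pos hvx _).le (Real.rpow_pos_of_pos hA _).le,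
      ← Real.rpow_mul hvx.le, ← Real.rpow_mul hA.le]
    have e1 : (1 - pstar) * (p - 1) = -1 := by nlinarith [hpp]
    have e2 : (pstar - 1) * (p - 1) = 1 := by nlinarith [hpp]
    rw [e1, e2, Real.rpow_one, Real.rpow_neg_one]
    field_simp
  · -- the inequality
    intro x hx
    have hvx := hv x hx
    have hA := hApos x hx
    have hEq : v x * (-(-(H x))) ^ (p - 1) = ∫ t in Ioo 0 x, f t ^ (p - 1) * u t := by
      rw [neg_neg]
      rw [Real.mul_rpow (Real.rpow_pos_of_pos hvx _).le (Real.rpow_pos_of_pos hA _).le,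
        ← Real.rpow_mul hvx.le, ← Real.rpow_mul hA.le]
      have e1 : (1 - pstar) * (p - 1) = -1 := by nlinarith [hpp]
      have e2 : (pstar - 1) * (p - 1) = 1 := by nlinarith [hpp]
      rw [e1, e2, Real.rpow_one, Real.rpow_neg_one]
      field_simp
    rw [hEq]
    -- pointwise bound g^(p-1) ≤ ξ⁻¹ f^(p-1) on Ioo 0 D
    have hgle : ∀ t ∈ Ioo (0:ℝ) D, g t ^ (p-1) ≤ ξ⁻¹ * f t ^ (p-1) := by
      intro t ht
      have h1 := hξI t ht
      rw [← hg t] at h1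
      have hft := hfpos t ht
      have hgt := hgpos t ht
      have hc : 0 < f t ^ (1-p) * g t ^ (p-1) :=
        mul_pos (Real.rpow_pos_of_pos hft _) (Real.rpow_pos_of_pos hgt _)
      have h2 : f t ^ (1-p) * g t ^ (p-1) ≤ ξ⁻¹ := aux_inv_le hξ h1
      have h3 : f t ^ (1-p) * f t ^ (p-1) = 1 := by
        rw [← Real.rpow_add hft]; norm_num
      have h4 : g t ^ (p-1) = (f t ^ (1-p) * g t ^ (p-1)) * f t ^ (p-1) := by
        rw [mul_right_comm, h3, one_mul]
      rw [h4]
      exact mul_le_mul_of_nonneg_right h2 (Real.rpow_pos_of_pos hft _).le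
    -- integrability of g^(p-1) u on Ioo 0 x
    have hgc : ContinuousOn g (Ioo 0 x) := by
      intro t ht
      have htD : t ∈ Ioo (0:ℝ) D := ⟨ht.1, ht.2.trans hx.2⟩
      -- g is differentiable, hence continuous; reprove locally
      have hsplit : ∀ y ∈ Ioo (0:ℝ) D,
          g y = (∫ s in (0:ℝ)..D, H s) - ∫ s in (0:ℝ)..y, H s := by
        intro y hy
        have := intervalIntegral.integral_add_adjacent_intervals
          (hHii 0 y le_rfl hy.2.le hy.1.le) (hHii y D hy.1.le le_rfl hy.2.le)
        rw [hgi y hy.2.le]; linarith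
      have hd : HasDerivAt (fun y => ∫ s in (0:ℝ)..y, H s) (H t) t :=
        intervalIntegral.integral_hasDerivAt_right (hHii 0 t le_rfl htD.2.le htD.1.le)
          (hC.stronglyMeasurableAtFilter isOpen_Ioo t htD)
          (hC.continuousAt (isOpen_Ioo.mem_nhds htD))
      have hd2 := (hd.const_sub (∫ s in (0:ℝ)..D, H s)).congr_of_eventuallyEq
        (by filter_upwards [isOpen_Ioo.mem_nhds htD] with y hy; exact hsplit y hy)
      exact hd2.continuousAt.continuousWithinAt
    have hGint : IntegrableOn (fun t => g t ^ (p - 1) * u t) (Ioo 0 x) := by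
      have hmeas : AEStronglyMeasurable (fun t => g t ^ (p - 1) * u t)
          (volume.restrict (Ioo 0 x)) :=
        ((hgc.rpow_const (fun t _ => Or.inr hp1.le)).aestronglyMeasurable
          measurableSet_Ioo).mul (huI x hx).aestronglyMeasurable
      refine Integrable.mono' ((hFint x hx).const_mul ξ⁻¹) hmeas ?_
      filter_upwards [ae_restrict_mem measurableSet_Ioo] with t ht
      have htD : t ∈ Ioo (0:ℝ) D := ⟨ht.1, ht.2.trans hx.2⟩
      have hgt := hgpos t htD
      have hut := hu t htD
      have h0 : 0 < g t ^ (p - 1) * u t :=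
        mul_pos (Real.rpow_pos_of_pos hgt _) hut
      rw [Real.norm_eq_abs, abs_of_pos h0]
      have := hgle t htD
      calc g t ^ (p-1) * u t ≤ (ξ⁻¹ * f t ^ (p-1)) * u t :=
            mul_le_mul_of_nonneg_right this hut.le
        _ = ξ⁻¹ * (f t ^ (p-1) * u t) := by ring
    have hBpos : 0 < ∫ t in Ioo 0 x, g t ^ (p - 1) * u t := by
      rw [← integral_Ioc_eq_integral_Ioo, ← intervalIntegral.integral_of_le hx.1.le]
      refine intervalIntegral.intervalIntegral_pos_of_pos_on ?_ ?_ hx.1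
      · rw [intervalIntegrable_iff_integrableOn_Ioo_of_le hx.1.le]; exact hGint
      · intro t ht
        have htD : t ∈ Ioo (0:ℝ) D := ⟨ht.1, ht.2.trans hx.2⟩
        exact mul_pos (Real.rpow_pos_of_pos (hgpos t htD) _) (hu t htD)
    have hBle : (∫ t in Ioo 0 x, g t ^ (p - 1) * u t)
        ≤ ξ⁻¹ * ∫ t in Ioo 0 x, f t ^ (p - 1) * u t := by
      have := setIntegral_mono_on hGint ((hFint x hx).const_mul ξ⁻¹)
        measurableSet_Ioo (fun t ht => by
          have htD : t ∈ Ioo (0:ℝ) D := ⟨ht.1, ht.2.trans hx.2⟩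
          calc g t ^ (p-1) * u t ≤ (ξ⁻¹ * f t ^ (p-1)) * u t :=
                mul_le_mul_of_nonneg_right (hgle t htD) (hu t htD).le
            _ = ξ⁻¹ * (f t ^ (p-1) * u t) := by ring)
      rwa [MeasureTheory.integral_const_mul] at this
    set B := ∫ t in Ioo 0 x, g t ^ (p - 1) * u t
    set A := ∫ t in Ioo 0 x, f t ^ (p - 1) * u t
    have hr : 0 < B / A := div_pos hBpos hA
    have hrle : B / A ≤ ξ⁻¹ := (div_le_iff₀ hA).mpr (by linarith)
    have := inv_anti₀ hr hrle
    rwa [inv_inv] at this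
end

section
/- Example (uniform weights, improved lower bound): for u = v = 1 on (0,1), the quantity δ̄₁ = sup_{x∈(0,1)} [ x(1−x)^(p-1) + (1−x)^{-1} ∫_x^1 (1−t)^p dt ] satisfies δ̄₁^(1/p) = p^(1/p − 2) (p² − 1)^(1 − 1/p). -/
open MeasureTheory Set

lemma integ16 (p x : ℝ) (hp : 0 ≤ p) (hx : x ≤ 1) :
    ∫ t in Ioo x 1, (1 - t) ^ p = (1 - x) ^ (p + 1) / (p + 1) := by
  rw [← integral_Ioc_eq_integral_Ioo, ← intervalIntegral.integral_of_le hx,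
    intervalIntegral.integral_comp_sub_left (fun s => s ^ p) 1]
  simp only [sub_self]
  rw [integral_rpow (Or.inl (by linarith))]
  rw [Real.zero_rpow (by linarith), sub_zero]

lemma fval16 (p x : ℝ) (hp : 1 < p) (hx0 : 0 < x) (hx1 : x < 1) :
    x * (1 - x) ^ (p - 1) + (1 - x)⁻¹ * ((1 - x) ^ (p + 1) / (p + 1))
      = (1 - x) ^ (p - 1) * (1 - p / (p + 1) * (1 - x)) := by
  have hy : (0:ℝ) < 1 - x := by linarith
  have h1 : (1 - x) ^ (p + 1) = (1 - x) ^ (p - 1) * ((1 - x) * (1 - x)) := by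
    rw [show (p + 1) = (p - 1) + (1 + 1) by ring, Real.rpow_add hy, Real.rpow_add hy,
      Real.rpow_one]
  rw [h1]
  field_simp
  ring

lemma bound16 (p y : ℝ) (hp : 1 < p) (hy : 0 < y) (hy1 : y ≤ 1) :
    y ^ (p - 1) * (1 - p / (p + 1) * y) ≤ p ^ (1 - 2 * p) * (p ^ 2 - 1) ^ (p - 1) := by
  have hp0 : (0:ℝ) < p := by linarith
  have hp1 : (0:ℝ) < p + 1 := by linarith
  have hps : (0:ℝ) < p ^ 2 - 1 := by nlinarith
  set l : ℝ := p / (p ^ 2 - 1) with hl_def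
  have hl : 0 < l := by positivity
  have ha : 0 ≤ l * y := by positivity
  have hb : 0 ≤ 1 - p / (p + 1) * y := by
    rw [sub_nonneg, div_mul_eq_mul_div, div_le_one hp1]; nlinarith
  have hw : (p - 1) / p + 1 / p = 1 := by field_simp; ring
  have key := Real.geom_mean_le_arith_mean2_weighted
    (div_nonneg (by linarith) hp0.le) (by positivity : (0:ℝ) ≤ 1 / p) ha hb hw
  have hsum : (p - 1) / p * (l * y) + 1 / p * (1 - p / (p + 1) * y) = 1 / p := by
    rw [hl_def]; field_simp; ring
  rw [hsum] at key
  have key2 : ((l * y) ^ ((p - 1) / p) * (1 - p / (p + 1) * y) ^ (1 / p)) ^ p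
      ≤ (1 / p) ^ p := Real.rpow_le_rpow (by positivity) key hp0.le
  rw [Real.mul_rpow (by positivity) (by positivity), ← Real.rpow_mul ha,
    ← Real.rpow_mul hb, div_mul_cancel₀ _ hp0.ne', one_div_mul_cancel hp0.ne',
    Real.rpow_one, Real.mul_rpow hl.le hy.le, mul_assoc] at key2
  have hlp : (0:ℝ) < l ^ (p - 1) := Real.rpow_pos_of_pos hl _
  have e3 : (1 / p : ℝ) ^ p = p ^ (-p) := by
    rw [one_div, Real.inv_rpow hp0.le, ← Real.rpow_neg hp0.le]
  have eM : l ^ (p - 1) * (p ^ (1 - 2 * p) * (p ^ 2 - 1) ^ (p - 1)) = (1 / p) ^ p := by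
    rw [hl_def, Real.div_rpow hp0.le hps.le, e3, div_mul_eq_mul_div,
      mul_comm (p ^ (1 - 2 * p)) _, mul_div_assoc, mul_comm ((p^2-1) ^ (p-1)) _,
      mul_div_assoc, div_self (by positivity : ((p^2-1:ℝ)) ^ (p-1) ≠ 0), mul_one,
      ← Real.rpow_add hp0]
    ring_nf
  rw [← eM] at key2
  exact (mul_le_mul_iff_right₀ hlp).mp key2

lemma eq16 (p : ℝ) (hp : 1 < p) :
    ((p ^ 2 - 1) / p ^ 2) ^ (p - 1) * (1 - p / (p + 1) * ((p ^ 2 - 1) / p ^ 2))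
      = p ^ (1 - 2 * p) * (p ^ 2 - 1) ^ (p - 1) := by
  have hp0 : (0:ℝ) < p := by linarith
  have hp1 : (0:ℝ) < p + 1 := by linarith
  have hps : (0:ℝ) < p ^ 2 - 1 := by nlinarith
  have h2 : (1 : ℝ) - p / (p + 1) * ((p ^ 2 - 1) / p ^ 2) = 1 / p := by
    field_simp; ring
  rw [h2, Real.div_rpow hps.le (by positivity)]
  have h3 : ((p:ℝ) ^ 2) ^ (p - 1) = p ^ (p - 1) * p ^ (p - 1) := by
    rw [sq, Real.mul_rpow hp0.le hp0.le]
  have h4 : (p:ℝ) ^ (1 - 2 * p) * (p ^ (p - 1) * p ^ (p - 1) * p) = 1 := by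
    rw [show (p:ℝ) ^ (p - 1) * p ^ (p - 1) * p = p ^ (p - 1) * p ^ (p - 1) * p ^ (1:ℝ) from
        by rw [Real.rpow_one], ← Real.rpow_add hp0, ← Real.rpow_add hp0, ← Real.rpow_add hp0,
      show (1 - 2 * p) + (p - 1 + (p - 1) + 1) = 0 by ring, Real.rpow_zero]
  rw [h3]
  field_simp
  ring_nf at h4 ⊢
  nlinarith [Real.rpow_pos_of_pos hps (p-1), Real.rpow_pos_of_pos hp0 (p-1),
    Real.rpow_pos_of_pos hp0 (1 - 2*p)]

/-- Example with uniform weights on `(0,1)`: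
`δ̄₁ = sup_{x∈(0,1)} [x(1-x)^(p-1) + (1-x)⁻¹∫_x^1 (1-t)^p dt]` satisfies
`δ̄₁^(1/p) = p^(1/p-2)(p²-1)^(1-1/p)`, i.e. `δ̄₁ = p^(1-2p)(p²-1)^(p-1)`. -/
theorem stmt16 (p : ℝ) (hp : 1 < p) :
    IsLUB {r : ℝ | ∃ x ∈ Ioo (0:ℝ) 1,
        r = x * (1 - x) ^ (p - 1) + (1 - x)⁻¹ * ∫ t in Ioo x 1, (1 - t) ^ p}
      (p ^ (1 - 2 * p) * (p ^ 2 - 1) ^ (p - 1)) := by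
  have hp0 : (0:ℝ) < p := by linarith
  have hps : (0:ℝ) < p ^ 2 - 1 := by nlinarith
  have hp2 : (1:ℝ) < p ^ 2 := by nlinarith
  constructor
  · rintro r ⟨x, ⟨hx0, hx1⟩, rfl⟩
    rw [integ16 p x (by linarith) hx1.le, fval16 p x hp hx0 hx1]
    exact bound16 p (1 - x) hp (by linarith) (by linarith)
  · intro b hb
    have hmem : p ^ (1 - 2 * p) * (p ^ 2 - 1) ^ (p - 1) ∈
        {r : ℝ | ∃ x ∈ Ioo (0:ℝ) 1,
          r = x * (1 - x) ^ (p - 1) + (1 - x)⁻¹ * ∫ t in Ioo x 1, (1 - t) ^ p} := by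
      refine ⟨(p ^ 2)⁻¹, ⟨by positivity, by rw [inv_lt_one_iff₀]; right; exact hp2⟩, ?_⟩
      have hx1 : ((p:ℝ) ^ 2)⁻¹ < 1 := by rw [inv_lt_one_iff₀]; right; exact hp2
      have h1x : (1:ℝ) - (p ^ 2)⁻¹ = (p ^ 2 - 1) / p ^ 2 := by field_simp
      rw [integ16 p _ (by linarith) hx1.le, fval16 p _ hp (by positivity) hx1, h1x, eq16 p hp]
    exact hb hmem
end
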